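/- arXiv:1402.5819 — 7 statements merged into one kernel-verified Lean document; each statement's English description precedes it below -/
import Mathlib

section
/- Let X_1, X_2, ... be i.i.d. random variables with values in {1,2,3,...}, and construct a chain C of cycles C_1, C_2, ... where C_i has length X_i + 1 and the root x_{i+1} of C_{i+1} is attached at a uniformly chosen point of C_i \ {x_i}. Let A_n be the set of vertices of C within graph distance n of the root x_1. Then E(|A_n|) ≤ 16n + 1 for all n ≥ 0. -/
open MeasureTheory ProbabilityTheory Filter Real

/-- Distance from the root of the chain of cycles to the root `x_{i+1}` of the `(i+1)`-st
cycle: cycle `C_i` has `X i + 1` vertices, and `x_{i+1}` sits at position `U i ∈ {1,...,X i}`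
on `C_i`, at distance `min (U i) (X i + 1 - U i)` from `x_i`. -/
def chainD (X U : ℕ → ℕ) : ℕ → ℕ
  | 0 => 0
  | i + 1 => chainD X U i + min (U i) (X i + 1 - U i)

lemma chainD_eq_sum (X U : ℕ → ℕ) (i : ℕ) :
    chainD X U i = ∑ k ∈ Finset.range i, min (U k) (X k + 1 - U k) := by
  induction i with
  | zero => rfl
  | succ i ih => rw [Finset.sum_range_succ, ← ih]; rfl

lemma comb_key (m n t : ℕ) (hm : 1 ≤ m) (hn : 1 ≤ n) (ht : t = min n ((m+3)/4)) :
    m * min m (2 * n) ≤ 8 * ((m + 2 - 2*t) * t) := by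
  have hq : m ≤ 4 * ((m+3)/4) ∧ 4 * ((m+3)/4) ≤ m + 3 := by omega
  have h2t : 2 * t ≤ m + 1 := by omega
  obtain ⟨a, ha⟩ : ∃ a, m + 2 - 2*t = a ∧ a + 2*t = m + 2 := ⟨m + 2 - 2*t, rfl, by omega⟩
  rw [ha.1]
  rcases min_cases n ((m+3)/4) with ⟨he, hle⟩ | ⟨he, hle⟩
  · have h4a : m ≤ 4 * a := by omega
    rcases min_cases m (2*n) with ⟨he2, hle2⟩ | ⟨he2, hle2⟩
    · rw [he2]; nlinarith [ha.2, h4a, ht, he]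
    · rw [he2]; nlinarith [ha.2, h4a, ht, he]
  · have h4t : m ≤ 4 * t ∧ 4 * t ≤ m + 3 := by omega
    have h2a : m + 1 ≤ 2 * a := by omega
    rcases min_cases m (2*n) with ⟨he2, hle2⟩ | ⟨he2, hle2⟩
    · rw [he2]; nlinarith [h4t.1, h2a]
    · rw [he2]; nlinarith [h4t.1, h2a, ht, hle]

lemma comb_sum (m n : ℕ) (hm : 1 ≤ m) (hn : 1 ≤ n) :
    m * min m (2 * n) ≤ 8 * ∑ u ∈ Finset.Icc 1 m, min (min u (m + 1 - u)) n := by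
  set t := min n ((m+3)/4) with ht
  have ht1 : 1 ≤ t := by omega
  have h2t : 2 * t ≤ m + 1 := by omega
  have hsub : Finset.Icc t (m + 1 - t) ⊆ Finset.Icc 1 m := by
    intro u hu; simp only [Finset.mem_Icc] at *; omega
  have hlow : (m + 2 - 2*t) * t ≤ ∑ u ∈ Finset.Icc 1 m, min (min u (m + 1 - u)) n := by
    calc (m + 2 - 2*t) * t = ∑ u ∈ Finset.Icc t (m + 1 - t), t := by
          rw [Finset.sum_const, Nat.card_Icc, smul_eq_mul]; congr 1; omega
      _ ≤ ∑ u ∈ Finset.Icc t (m + 1 - t), min (min u (m + 1 - u)) n := by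
          apply Finset.sum_le_sum; intro u hu
          simp only [Finset.mem_Icc] at hu
          simp only [le_min_iff]; omega
      _ ≤ _ := Finset.sum_le_sum_of_subset hsub
  calc m * min m (2*n) ≤ 8 * ((m + 2 - 2*t) * t) := comb_key m n t hm hn ht
    _ ≤ _ := by omega

lemma tele (y : ℕ → ℕ) (n : ℕ) (hy1 : ∀ k, 1 ≤ y k) (hyn : ∀ k, y k ≤ n) :
    ∑' i, (if (∑ k ∈ Finset.range i, y k) ≤ n then (y i : ENNReal) else 0) ≤ 2 * n := by
  have hmono : ∀ {i j : ℕ}, i ≤ j → ∑ k ∈ Finset.range i, y k ≤ ∑ k ∈ Finset.range j, y k := by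
    intro i j hij
    exact Finset.sum_le_sum_of_subset (Finset.range_subset_range.2 hij)
  have hge : ∀ i, i ≤ ∑ k ∈ Finset.range i, y k := by
    intro i
    calc i = ∑ k ∈ Finset.range i, 1 := by simp
      _ ≤ _ := Finset.sum_le_sum fun k _ => hy1 k
  have hex : ∃ i, n < ∑ k ∈ Finset.range i, y k := ⟨n + 1, lt_of_lt_of_le (by omega) (hge (n+1))⟩
  set T := Nat.find hex with hT
  have hTspec := Nat.find_spec hex
  have hTmin : ∀ i < T, ∑ k ∈ Finset.range i, y k ≤ n := fun i hi => le_of_not_gt (Nat.find_min hex hi)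
  have hzero : ∀ i ∉ Finset.range T,
      (if (∑ k ∈ Finset.range i, y k) ≤ n then (y i : ENNReal) else 0) = 0 := by
    intro i hi
    rw [Finset.mem_range, not_lt] at hi
    rw [if_neg (by exact not_le.2 (lt_of_lt_of_le hTspec (hmono hi)))]
  rw [tsum_eq_sum hzero]
  have heq : ∑ i ∈ Finset.range T, (if (∑ k ∈ Finset.range i, y k) ≤ n then (y i : ENNReal) else 0)
      = ((∑ i ∈ Finset.range T, y i : ℕ) : ENNReal) := by
    rw [Nat.cast_sum]
    apply Finset.sum_congr rfl
    intro i hi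
    rw [if_pos (hTmin i (Finset.mem_range.1 hi))]
  rw [heq]
  have hb : ∑ i ∈ Finset.range T, y i ≤ 2 * n := by
    rcases Nat.eq_zero_or_pos T with h0 | hpos
    · simp [h0]
    · obtain ⟨T', hT'⟩ : ∃ T', T = T' + 1 := ⟨T - 1, by omega⟩
      rw [hT']
      rw [Finset.sum_range_succ]
      have := hTmin T' (by omega)
      have := hyn T'
      omega
  calc ((∑ i ∈ Finset.range T, y i : ℕ) : ENNReal) ≤ ((2 * n : ℕ) : ENNReal) := by exact_mod_cast hb
    _ = 2 * n := by push_cast; ring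

lemma count_bound (m D D' n : ℕ) (hD : D' ≤ D) (b : ℕ → ENNReal)
    (hb0 : ∀ j, ¬(1 ≤ j ∧ j ≤ m ∧ D + min j (m + 1 - j) ≤ n) → b j = 0)
    (hb1 : ∀ j, b j ≤ 1) :
    ∑' j : ℕ, b j ≤ (if D' ≤ n then (1:ENNReal) else 0) * ((min m (2*n) : ℕ) : ENNReal) := by
  by_cases hDn : D ≤ n
  · rw [if_pos (le_trans hD hDn), one_mul]
    set s : Finset ℕ := (Finset.Icc 1 (n - D) ∪ Finset.Icc (m + 1 - (n - D)) m) ∩ Finset.Icc 1 m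
      with hs
    have hzero : ∀ j ∉ s, b j = 0 := by
      intro j hj
      apply hb0
      intro ⟨h1, h2, h3⟩
      apply hj
      simp only [hs, Finset.mem_inter, Finset.mem_union, Finset.mem_Icc]
      omega
    rw [tsum_eq_sum hzero]
    have hcard : s.card ≤ min m (2 * n) := by
      apply le_min
      · exact le_trans (Finset.card_le_card (Finset.inter_subset_right)) (by simp)
      · refine le_trans (Finset.card_le_card (Finset.inter_subset_left)) ?_
        refine le_trans (Finset.card_union_le _ _) ?_
        simp only [Nat.card_Icc]
        omega
    calc ∑ j ∈ s, b j ≤ ∑ _j ∈ s, (1:ENNReal) := Finset.sum_le_sum fun j _ => hb1 j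
      _ = (s.card : ENNReal) := by simp
      _ ≤ ((min m (2*n) : ℕ) : ENNReal) := by exact_mod_cast hcard
  · have hz : ∀ j : ℕ, b j = 0 := fun j => hb0 j (by intro ⟨h1, h2, h3⟩; omega)
    simp only [hz, tsum_zero]
    exact zero_le

/-- The chain of cycles: `C_i` has length `X_i + 1` with i.i.d. `X_i ≥ 1`, and the root of
`C_{i+1}` is attached at a uniform point of `C_i \ {x_i}`.  The non-root vertices of
cycle `C_i` are the pairs `(i, j)` with `1 ≤ j ≤ X_i`, whose distance from the root `x_1`
is `chainD X U i + min j (X_i + 1 - j)`.  The expected number of vertices of the chain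
within distance `n` of the root (`1` for the root plus one for each pair `(i,j)` within
distance `n`, expectations computed as the sum of the corresponding probabilities) is at
most `16 n + 1`. -/
theorem stmt3 {Ω : Type*} [MeasureSpace Ω] [IsProbabilityMeasure (ℙ : Measure Ω)]
    (X U : ℕ → Ω → ℕ) (hXmeas : ∀ i, Measurable (X i)) (hUmeas : ∀ i, Measurable (U i))
    (hX1 : ∀ i ω, 1 ≤ X i ω)
    (hUrange : ∀ i ω, 1 ≤ U i ω ∧ U i ω ≤ X i ω)
    (hindep : iIndepFun (fun i ω => (X i ω, U i ω)) ℙ)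
    (hident : ∀ i, Measure.map (fun ω => (X i ω, U i ω)) ℙ
      = Measure.map (fun ω => (X 0 ω, U 0 ω)) ℙ)
    (hUunif : ∀ i k j : ℕ, 1 ≤ j → j ≤ k →
      (ℙ {ω | X i ω = k ∧ U i ω = j}).toReal = (ℙ {ω | X i ω = k}).toReal / k) :
    ∀ n : ℕ,
      1 + ∑' (i : ℕ) (j : ℕ),
          ℙ {ω | 1 ≤ j ∧ j ≤ X i ω ∧
            chainD (fun k => X k ω) (fun k => U k ω) i + min j (X i ω + 1 - j) ≤ n}
        ≤ ((16 * n + 1 : ℕ) : ENNReal) := by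
  intro n
  rcases Nat.eq_zero_or_pos n with rfl | hn
  · have hzero : ∀ i j : ℕ, ℙ {ω | 1 ≤ j ∧ j ≤ X i ω ∧
        chainD (fun k => X k ω) (fun k => U k ω) i + min j (X i ω + 1 - j) ≤ 0} = 0 := by
      intro i j
      have : {ω | 1 ≤ j ∧ j ≤ X i ω ∧
          chainD (fun k => X k ω) (fun k => U k ω) i + min j (X i ω + 1 - j) ≤ 0} = ∅ := by
        ext ω
        simp only [Set.mem_setOf_eq, Set.mem_empty_iff_false, iff_false, not_and]
        intro h1 h2 h3
        omega
      rw [this, measure_empty]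
    simp only [hzero, tsum_zero, add_zero]
    simp
  -- main case n ≥ 1
  have hVmeas : ∀ i, Measurable (fun ω => (X i ω, U i ω)) := fun i =>
    (hXmeas i).prodMk (hUmeas i)
  set ψ : ℕ × ℕ → ℕ := fun p => min (min p.2 (p.1 + 1 - p.2)) n with hψdef
  set φ : ℕ × ℕ → ℕ := fun p => min p.1 (2 * n) with hφdef
  -- measurability of chainD
  have hDmeas : ∀ i, Measurable (fun ω => chainD (fun k => X k ω) (fun k => U k ω) i) := by
    intro i
    induction i with
    | zero => exact measurable_const
    | succ i ih =>
      exact (measurable_of_countable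
          (fun p : ℕ × (ℕ × ℕ) => p.1 + min p.2.2 (p.2.1 + 1 - p.2.2))).comp
        (ih.prodMk (hVmeas i))
  have hD'meas : ∀ i, Measurable (fun ω => ∑ k ∈ Finset.range i, ψ (X k ω, U k ω)) := by
    intro i
    induction i with
    | zero => simpa using measurable_const
    | succ i ih =>
      have : (fun ω => ∑ k ∈ Finset.range (i+1), ψ (X k ω, U k ω))
          = fun ω => (fun p : ℕ × (ℕ × ℕ) => p.1 + ψ p.2)
            ((∑ k ∈ Finset.range i, ψ (X k ω, U k ω), (X i ω, U i ω))) := by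
        funext ω; simp [Finset.sum_range_succ]
      rw [this]
      exact Measurable.comp (f := fun ω => ((∑ k ∈ Finset.range i, ψ (X k ω, U k ω), (X i ω, U i ω))))
        (measurable_of_countable (fun p : ℕ × (ℕ × ℕ) => p.1 + ψ p.2)) (ih.prodMk (hVmeas i))
  -- f1 and its measurability
  have hf1meas : ∀ i, Measurable (fun ω =>
      if (∑ k ∈ Finset.range i, ψ (X k ω, U k ω)) ≤ n then (1:ENNReal) else 0) := by
    intro i
    exact Measurable.ite ((hD'meas i) (MeasurableSet.of_discrete (s := {d : ℕ | d ≤ n})))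
      measurable_const measurable_const
  -- independence key
  have hkey : ∀ (i : ℕ) (g : ℕ × ℕ → ENNReal),
      ∫⁻ ω, (if (∑ k ∈ Finset.range i, ψ (X k ω, U k ω)) ≤ n then (1:ENNReal) else 0)
          * g (X i ω, U i ω)
        = (∫⁻ ω, (if (∑ k ∈ Finset.range i, ψ (X k ω, U k ω)) ≤ n then (1:ENNReal) else 0))
          * ∫⁻ ω, g (X i ω, U i ω) := by
    intro i g
    have hdisj : Disjoint (Finset.range i) ({i} : Finset ℕ) := by simp
    have hAB := hindep.indepFun_finset (Finset.range i) {i} hdisj hVmeas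
    have hcomp := hAB.comp (φ := fun v : ((k : (Finset.range i : Finset ℕ)) → ℕ × ℕ) =>
        if (∑ k : (Finset.range i : Finset ℕ), ψ (v k)) ≤ n then (1:ENNReal) else 0)
      (ψ := fun v : ((k : ({i} : Finset ℕ)) → ℕ × ℕ) => g (v ⟨i, by simp⟩))
      (measurable_of_countable _) (measurable_of_countable _)
    have e1 : ((fun v : ((k : (Finset.range i : Finset ℕ)) → ℕ × ℕ) =>
          if (∑ k : (Finset.range i : Finset ℕ), ψ (v k)) ≤ n then (1:ENNReal) else 0)
        ∘ (fun ω (k : (Finset.range i : Finset ℕ)) => (X k ω, U k ω)))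
        = fun ω => if (∑ k ∈ Finset.range i, ψ (X k ω, U k ω)) ≤ n then (1:ENNReal) else 0 := by
      funext ω
      simp only [Function.comp]
      exact if_congr (by rw [Finset.sum_coe_sort (Finset.range i) (fun k => ψ (X k ω, U k ω))])
        rfl rfl
    have e2 : ((fun v : ((k : ({i} : Finset ℕ)) → ℕ × ℕ) => g (v ⟨i, by simp⟩))
        ∘ (fun ω (k : ({i} : Finset ℕ)) => (X k ω, U k ω)))
        = fun ω => g (X i ω, U i ω) := rfl
    rw [e1, e2] at hcomp
    have := lintegral_mul_eq_lintegral_mul_lintegral_of_indepFun (hf1meas i)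
      ((measurable_of_countable g).comp (hVmeas i)) hcomp
    simpa [Pi.mul_apply] using this
  -- distributional comparison
  have hdist : ∀ i, (∫⁻ ω, ((φ (X i ω, U i ω) : ℕ) : ENNReal))
      ≤ 8 * ∫⁻ ω, ((ψ (X i ω, U i ω) : ℕ) : ENNReal) := by
    intro i
    have hmap : ∀ (h : ℕ × ℕ → ℕ), ∫⁻ ω, ((h (X i ω, U i ω) : ℕ) : ENNReal)
        = ∑' p : ℕ × ℕ, ((h p : ℕ) : ENNReal)
            * (Measure.map (fun ω => (X i ω, U i ω)) ℙ) {p} := by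
      intro h
      rw [← lintegral_map (measurable_of_countable fun p => ((h p : ℕ) : ENNReal)) (hVmeas i),
        lintegral_countable']
    rw [hmap φ, hmap ψ, ENNReal.tsum_prod', ENNReal.tsum_prod', ← ENNReal.tsum_mul_left]
    apply ENNReal.tsum_le_tsum
    intro m
    have hμ : ∀ p : ℕ × ℕ, (Measure.map (fun ω => (X i ω, U i ω)) ℙ) {p}
        = ℙ {ω | X i ω = p.1 ∧ U i ω = p.2} := by
      intro p
      rw [Measure.map_apply (hVmeas i) (measurableSet_singleton p)]
      congr 1
      ext ω
      simp [Prod.ext_iff]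
    have hμ0 : ∀ u : ℕ, (u = 0 ∨ m < u ∨ m = 0)
        → (Measure.map (fun ω => (X i ω, U i ω)) ℙ) {(m, u)} = 0 := by
      intro u h
      rw [hμ]
      have : {ω | X i ω = m ∧ U i ω = u} = ∅ := by
        ext ω
        simp only [Set.mem_setOf_eq, Set.mem_empty_iff_false, iff_false, not_and]
        intro h1 h2
        have := hUrange i ω
        have := hX1 i ω
        omega
      rw [this, measure_empty]
    rcases Nat.eq_zero_or_pos m with rfl | hm
    · have : ∀ u : ℕ, ((φ (0, u) : ℕ) : ENNReal)
          * (Measure.map (fun ω => (X i ω, U i ω)) ℙ) {(0, u)} = 0 := by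
        intro u
        rw [hμ0 u (by omega), mul_zero]
      simp only [this, tsum_zero]
      exact zero_le
    · set c := (Measure.map (fun ω => (X i ω, U i ω)) ℙ) {(m, 1)} with hc
      have hcu : ∀ u, 1 ≤ u → u ≤ m
          → (Measure.map (fun ω => (X i ω, U i ω)) ℙ) {(m, u)} = c := by
        intro u h1 h2
        rw [hc, hμ, hμ]
        have hne1 : ℙ {ω | X i ω = m ∧ U i ω = u} ≠ ⊤ := measure_ne_top _ _
        have hne2 : ℙ {ω | X i ω = m ∧ U i ω = 1} ≠ ⊤ := measure_ne_top _ _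
        rw [← ENNReal.toReal_eq_toReal_iff' hne1 hne2, hUunif i m u h1 h2,
          hUunif i m 1 le_rfl hm]
      have houtφ : ∀ u ∉ Finset.Icc 1 m, ((φ (m, u) : ℕ) : ENNReal)
          * (Measure.map (fun ω => (X i ω, U i ω)) ℙ) {(m, u)} = 0 := by
        intro u hu
        rw [hμ0 u (by simp only [Finset.mem_Icc] at hu; omega), mul_zero]
      have houtψ : ∀ u ∉ Finset.Icc 1 m, ((ψ (m, u) : ℕ) : ENNReal)
          * (Measure.map (fun ω => (X i ω, U i ω)) ℙ) {(m, u)} = 0 := by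
        intro u hu
        rw [hμ0 u (by simp only [Finset.mem_Icc] at hu; omega), mul_zero]
      rw [tsum_eq_sum houtφ, tsum_eq_sum houtψ]
      have hL : ∑ u ∈ Finset.Icc 1 m, ((φ (m, u) : ℕ) : ENNReal)
            * (Measure.map (fun ω => (X i ω, U i ω)) ℙ) {(m, u)}
          = ((∑ u ∈ Finset.Icc 1 m, φ (m, u) : ℕ) : ENNReal) * c := by
        rw [Nat.cast_sum, Finset.sum_mul]
        apply Finset.sum_congr rfl
        intro u hu
        simp only [Finset.mem_Icc] at hu
        rw [hcu u hu.1 hu.2]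
      have hR : ∑ u ∈ Finset.Icc 1 m, ((ψ (m, u) : ℕ) : ENNReal)
            * (Measure.map (fun ω => (X i ω, U i ω)) ℙ) {(m, u)}
          = ((∑ u ∈ Finset.Icc 1 m, ψ (m, u) : ℕ) : ENNReal) * c := by
        rw [Nat.cast_sum, Finset.sum_mul]
        apply Finset.sum_congr rfl
        intro u hu
        simp only [Finset.mem_Icc] at hu
        rw [hcu u hu.1 hu.2]
      rw [hL, hR]
      have hnat : (∑ u ∈ Finset.Icc 1 m, φ (m, u)) ≤ 8 * ∑ u ∈ Finset.Icc 1 m, ψ (m, u) := by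
        have hφc : ∑ u ∈ Finset.Icc 1 m, φ (m, u) = m * min m (2 * n) := by
          rw [hφdef]
          simp [Finset.sum_const, Nat.card_Icc]
        rw [hφc, hψdef]
        exact comb_sum m n hm hn
      calc ((∑ u ∈ Finset.Icc 1 m, φ (m, u) : ℕ) : ENNReal) * c
          ≤ ((8 * ∑ u ∈ Finset.Icc 1 m, ψ (m, u) : ℕ) : ENNReal) * c :=
            mul_le_mul_left (by exact_mod_cast hnat) c
        _ = 8 * (((∑ u ∈ Finset.Icc 1 m, ψ (m, u) : ℕ) : ENNReal) * c) := by
            push_cast; ring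
  -- step 1: per i bound of the inner tsum
  have step1 : ∀ i, (∑' j : ℕ, ℙ {ω | 1 ≤ j ∧ j ≤ X i ω ∧
        chainD (fun k => X k ω) (fun k => U k ω) i + min j (X i ω + 1 - j) ≤ n})
      ≤ ∫⁻ ω, (if (∑ k ∈ Finset.range i, ψ (X k ω, U k ω)) ≤ n then (1:ENNReal) else 0)
          * ((φ (X i ω, U i ω) : ℕ) : ENNReal) := by
    intro i
    have hmeasE : ∀ j : ℕ, MeasurableSet {ω | 1 ≤ j ∧ j ≤ X i ω ∧
        chainD (fun k => X k ω) (fun k => U k ω) i + min j (X i ω + 1 - j) ≤ n} := by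
      intro j
      exact ((hXmeas i).prodMk (hDmeas i))
        (MeasurableSet.of_discrete
          (s := {p : ℕ × ℕ | 1 ≤ j ∧ j ≤ p.1 ∧ p.2 + min j (p.1 + 1 - j) ≤ n}))
    calc ∑' j : ℕ, ℙ {ω | 1 ≤ j ∧ j ≤ X i ω ∧
          chainD (fun k => X k ω) (fun k => U k ω) i + min j (X i ω + 1 - j) ≤ n}
        = ∑' j : ℕ, ∫⁻ ω, ({ω | 1 ≤ j ∧ j ≤ X i ω ∧
            chainD (fun k => X k ω) (fun k => U k ω) i + min j (X i ω + 1 - j) ≤ n}).indicator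
              1 ω := by
          apply tsum_congr; intro j
          rw [lintegral_indicator_one (hmeasE j)]
      _ = ∫⁻ ω, ∑' j : ℕ, ({ω | 1 ≤ j ∧ j ≤ X i ω ∧
            chainD (fun k => X k ω) (fun k => U k ω) i + min j (X i ω + 1 - j) ≤ n}).indicator
              1 ω :=
          (lintegral_tsum fun j =>
            ((measurable_one.indicator (hmeasE j)).aemeasurable)).symm
      _ ≤ _ := by
          apply lintegral_mono
          intro ω
          have hle : (∑ k ∈ Finset.range i, ψ (X k ω, U k ω))
              ≤ chainD (fun k => X k ω) (fun k => U k ω) i := by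
            rw [chainD_eq_sum]
            apply Finset.sum_le_sum
            intro k _
            exact min_le_left _ _
          refine count_bound (X i ω) (chainD (fun k => X k ω) (fun k => U k ω) i)
            (∑ k ∈ Finset.range i, ψ (X k ω, U k ω)) n hle _ ?_ ?_
          · intro j hj
            exact Set.indicator_of_notMem (by simpa using hj) _
          · intro j
            classical
            by_cases h : ω ∈ {ω | 1 ≤ j ∧ j ≤ X i ω ∧
              chainD (fun k => X k ω) (fun k => U k ω) i + min j (X i ω + 1 - j) ≤ n}
            · simp [Set.indicator_of_mem h]
            · rw [Set.indicator_of_notMem h]; exact zero_le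
  -- assemble
  have hmain : (∑' (i : ℕ) (j : ℕ), ℙ {ω | 1 ≤ j ∧ j ≤ X i ω ∧
      chainD (fun k => X k ω) (fun k => U k ω) i + min j (X i ω + 1 - j) ≤ n})
      ≤ 16 * (n : ENNReal) := by
    calc (∑' (i : ℕ) (j : ℕ), ℙ {ω | 1 ≤ j ∧ j ≤ X i ω ∧
          chainD (fun k => X k ω) (fun k => U k ω) i + min j (X i ω + 1 - j) ≤ n})
        ≤ ∑' i : ℕ, ∫⁻ ω,
            (if (∑ k ∈ Finset.range i, ψ (X k ω, U k ω)) ≤ n then (1:ENNReal) else 0)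
            * ((φ (X i ω, U i ω) : ℕ) : ENNReal) := ENNReal.tsum_le_tsum step1
      _ ≤ ∑' i : ℕ, 8 * ∫⁻ ω,
            (if (∑ k ∈ Finset.range i, ψ (X k ω, U k ω)) ≤ n then (1:ENNReal) else 0)
            * ((ψ (X i ω, U i ω) : ℕ) : ENNReal) := by
          apply ENNReal.tsum_le_tsum
          intro i
          rw [hkey i (fun p => ((φ p : ℕ) : ENNReal)), hkey i (fun p => ((ψ p : ℕ) : ENNReal))]
          calc (∫⁻ ω, (if (∑ k ∈ Finset.range i, ψ (X k ω, U k ω)) ≤ n then (1:ENNReal) else 0))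
                * ∫⁻ ω, ((φ (X i ω, U i ω) : ℕ) : ENNReal)
              ≤ (∫⁻ ω, (if (∑ k ∈ Finset.range i, ψ (X k ω, U k ω)) ≤ n then (1:ENNReal) else 0))
                * (8 * ∫⁻ ω, ((ψ (X i ω, U i ω) : ℕ) : ENNReal)) :=
                mul_le_mul_right (hdist i) _
            _ = 8 * ((∫⁻ ω, (if (∑ k ∈ Finset.range i, ψ (X k ω, U k ω)) ≤ n
                  then (1:ENNReal) else 0))
                * ∫⁻ ω, ((ψ (X i ω, U i ω) : ℕ) : ENNReal)) := by ring
      _ = 8 * ∑' i : ℕ, ∫⁻ ω,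
            (if (∑ k ∈ Finset.range i, ψ (X k ω, U k ω)) ≤ n then (1:ENNReal) else 0)
            * ((ψ (X i ω, U i ω) : ℕ) : ENNReal) := ENNReal.tsum_mul_left
      _ = 8 * ∫⁻ ω, ∑' i : ℕ,
            (if (∑ k ∈ Finset.range i, ψ (X k ω, U k ω)) ≤ n then (1:ENNReal) else 0)
            * ((ψ (X i ω, U i ω) : ℕ) : ENNReal) := by
          rw [← lintegral_tsum]
          intro i
          exact ((hf1meas i).mul
            ((measurable_of_countable fun p => ((ψ p : ℕ) : ENNReal)).comp (hVmeas i))).aemeasurable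
      _ ≤ 8 * ∫⁻ _ω, (2 * (n : ENNReal)) := by
          apply mul_le_mul_right
          apply lintegral_mono
          intro ω
          have := tele (fun k => ψ (X k ω, U k ω)) n
            (fun k => by
              have h1 := hUrange k ω
              simp only [hψdef, le_min_iff]
              omega)
            (fun k => min_le_right _ _)
          refine le_trans (le_of_eq ?_) this
          apply tsum_congr
          intro i
          by_cases h : (∑ k ∈ Finset.range i, ψ (X k ω, U k ω)) ≤ n
          · rw [if_pos h, if_pos h, one_mul]
          · rw [if_neg h, if_neg h, zero_mul]
      _ = 16 * (n : ENNReal) := by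
          rw [lintegral_const, measure_univ, mul_one]
          ring
  have hfin : ((16 * n + 1 : ℕ) : ENNReal) = 16 * (n : ENNReal) + 1 := by push_cast; ring
  rw [hfin]
  calc 1 + ∑' (i : ℕ) (j : ℕ), ℙ {ω | 1 ≤ j ∧ j ≤ X i ω ∧
        chainD (fun k => X k ω) (fun k => U k ω) i + min j (X i ω + 1 - j) ≤ n}
      ≤ 1 + 16 * (n : ENNReal) := add_le_add_right hmain 1
    _ = 16 * (n : ENNReal) + 1 := add_comm _ _
end

section
/- With the random chain of cycles as above, let R_n be the number of non-root (open) vertices of the chain at distance at most n from the root. Let Y_i = min{U_i(X_i), X_i − U_i(X_i) + 1} and p = P(Y_i > 1). Then R_n stochastically dominates a Binomial(⌊n/2⌋, p) random variable. -/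
open MeasureTheory ProbabilityTheory Filter Real

/-- The number of open (non-root) vertices of the chain of cycles within distance `n` of
the root: the open vertices of cycle `C_i` are the pairs `(i, j)` with `1 ≤ j ≤ X_i` and
`j ≠ U i` (position `U i` being the root `x_{i+1}`), at distance
`chainD X U i + min j (X_i + 1 - j)` from the root. -/
noncomputable def openCount (X U : ℕ → ℕ) (n : ℕ) : ℕ :=
  Set.ncard {p : ℕ × ℕ | 1 ≤ p.2 ∧ p.2 ≤ X p.1 ∧ p.2 ≠ U p.1 ∧
    chainD X U p.1 + min p.2 (X p.1 + 1 - p.2) ≤ n}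

lemma chainD_zero (X U : ℕ → ℕ) : chainD X U 0 = 0 := rfl

lemma chainD_succ (X U : ℕ → ℕ) (i : ℕ) :
    chainD X U (i+1) = chainD X U i + min (U i) (X i + 1 - U i) := rfl

lemma chainD_strictMono (X U : ℕ → ℕ) (hU1 : ∀ i, 1 ≤ U i) (hUX : ∀ i, U i ≤ X i) :
    StrictMono (chainD X U) := by
  apply strictMono_nat_of_lt_succ
  intro i
  have h1 := hU1 i
  have h2 := hUX i
  rw [chainD_succ]
  omega

lemma self_le_chainD (X U : ℕ → ℕ) (hU1 : ∀ i, 1 ≤ U i) (hUX : ∀ i, U i ≤ X i) (i : ℕ) :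
    i ≤ chainD X U i := by
  induction i with
  | zero => simp [chainD_zero]
  | succ k ih =>
      have h := chainD_strictMono X U hU1 hUX (Nat.lt_succ_self k)
      simp only [Nat.succ_eq_add_one] at h
      show k + 1 ≤ chainD X U (k + 1)
      omega

/-- index of the cycle in which distance `d` falls -/
def chainIdx (X U : ℕ → ℕ) (d : ℕ) : ℕ := Nat.findGreatest (fun i => chainD X U i < d) d

lemma det_count (X U : ℕ → ℕ) (hX : ∀ i, 1 ≤ X i) (hU1 : ∀ i, 1 ≤ U i)
    (hUX : ∀ i, U i ≤ X i) (n : ℕ) :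
    ((Finset.range (n/2)).filter (fun i => 1 < min (U i) (X i + 1 - U i))).card
      ≤ openCount X U n := by
  classical
  set m := n / 2 with hm
  have h2m : 2 * m ≤ n := by omega
  set S := (Finset.range m).filter (fun i => 1 < min (U i) (X i + 1 - U i)) with hS
  set A : Set (ℕ × ℕ) := {p : ℕ × ℕ | 1 ≤ p.2 ∧ p.2 ≤ X p.1 ∧ p.2 ≠ U p.1 ∧
    chainD X U p.1 + min p.2 (X p.1 + 1 - p.2) ≤ n} with hA
  have hmono := chainD_strictMono X U hU1 hUX
  -- A is finite
  have hAfin : A.Finite := by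
    set B := (Finset.range n).sup X + 1 with hB
    apply Set.Finite.subset ((Set.finite_Iio n).prod (Set.finite_Iio B))
    intro q hq
    obtain ⟨h1, h2, h3, h4⟩ : 1 ≤ q.2 ∧ q.2 ≤ X q.1 ∧ q.2 ≠ U q.1 ∧
        chainD X U q.1 + min q.2 (X q.1 + 1 - q.2) ≤ n := hq
    have hi : q.1 < n := by
      have := self_le_chainD X U hU1 hUX q.1
      omega
    refine ⟨hi, ?_⟩
    have : X q.1 ≤ (Finset.range n).sup X := Finset.le_sup (Finset.mem_range.mpr hi)
    show q.2 < B
    omega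
  -- reduce to injections
  have key : ∀ (f : ℕ → ℕ × ℕ) (T : Finset ℕ), Set.InjOn f ↑T → (∀ i ∈ T, f i ∈ A) →
      T.card ≤ openCount X U n := by
    intro f T hinj hmaps
    calc T.card = (↑T : Set ℕ).ncard := (Set.ncard_coe_finset T).symm
      _ = (f '' ↑T).ncard := (Set.ncard_image_of_injOn hinj).symm
      _ ≤ A.ncard := Set.ncard_le_ncard (by rintro q ⟨i, hi, rfl⟩; exact hmaps i hi) hAfin
      _ = openCount X U n := rfl
  by_cases hcase : chainD X U m ≤ n
  · -- easy case
    apply key (fun i => (i, 1)) S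
    · intro a _ b _ h
      simpa using congrArg Prod.fst h
    · intro i hi
      simp only [hS, Finset.mem_filter, Finset.mem_range] at hi
      obtain ⟨him, hYi⟩ := hi
      have hU2 : 2 ≤ U i := by have := min_le_left (U i) (X i + 1 - U i); omega
      have hstep : chainD X U i + 1 ≤ chainD X U (i + 1) := by
        rw [chainD_succ]; have := hU1 i; have := hUX i; omega
      have hle : chainD X U (i + 1) ≤ chainD X U m := hmono.monotone him
      show 1 ≤ 1 ∧ 1 ≤ X i ∧ 1 ≠ U i ∧ chainD X U i + min 1 (X i + 1 - 1) ≤ n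
      have hXi := hX i
      refine ⟨le_refl 1, hXi, by omega, by omega⟩
  · push_neg at hcase
    have hm1 : 1 ≤ m := by
      by_contra h
      have hm0 : m = 0 := by omega
      rw [hm0, chainD_zero] at hcase
      omega
    -- the set of covered distances
    set D := (Finset.Icc 1 n).filter (fun d => ∀ j, chainD X U j ≠ d) with hD
    have hScard : S.card ≤ m := by
      calc S.card ≤ (Finset.range m).card := Finset.card_filter_le _ _
        _ = m := Finset.card_range m
    have hDcard : m ≤ D.card := by
      set B' := (Finset.Icc 1 n).filter (fun d => ¬ (∀ j, chainD X U j ≠ d)) with hB'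
      have hsplit : D.card + B'.card = n := by
        rw [hD, hB', Finset.card_filter_add_card_filter_not]
        simp
      have hBsub : B' ⊆ (Finset.Ico 1 m).image (chainD X U) := by
        intro d hd
        simp only [hB', Finset.mem_filter, Finset.mem_Icc, not_forall, not_ne_iff] at hd
        obtain ⟨⟨hd1, hdn⟩, j, hj⟩ := hd
        have hj1 : 1 ≤ j := by
          by_contra h
          have hj0 : j = 0 := by omega
          rw [hj0, chainD_zero] at hj
          omega
        have hjm : j < m := by
          by_contra h
          have : chainD X U m ≤ chainD X U j := hmono.monotone (by omega)
          omega
        exact Finset.mem_image.mpr ⟨j, Finset.mem_Ico.mpr ⟨hj1, hjm⟩, hj⟩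
      have hBcard : B'.card ≤ m - 1 := by
        calc B'.card ≤ ((Finset.Ico 1 m).image (chainD X U)).card := Finset.card_le_card hBsub
          _ ≤ (Finset.Ico 1 m).card := Finset.card_image_le
          _ = m - 1 := by simp
      omega
    -- injection from D into A
    have hIlt : ∀ d ∈ D, chainD X U (chainIdx X U d) < d := by
      intro d hd
      simp only [hD, Finset.mem_filter, Finset.mem_Icc] at hd
      exact Nat.findGreatest_spec (P := fun i => chainD X U i < d) (Nat.zero_le d)
        (by show (0:ℕ) < d; omega)
    have hIgt : ∀ d ∈ D, d < chainD X U (chainIdx X U d + 1) := by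
      intro d hd
      have hne : ∀ j, chainD X U j ≠ d := by
        simp only [hD, Finset.mem_filter] at hd; exact hd.2
      rcases lt_trichotomy (chainD X U (chainIdx X U d + 1)) d with h | h | h
      · exfalso
        have hle : chainIdx X U d + 1 ≤ d := by
          have := self_le_chainD X U hU1 hUX (chainIdx X U d + 1); omega
        have h2 : chainIdx X U d + 1 ≤ chainIdx X U d :=
          Nat.le_findGreatest (P := fun i => chainD X U i < d) hle h
        omega
      · exact absurd h (hne _)
      · exact h
    have hfinal : m ≤ openCount X U n := by
      refine le_trans hDcard
        (key (fun d => (chainIdx X U d, d - chainD X U (chainIdx X U d))) D ?_ ?_)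
      · intro d hd d' hd' heq
        have e1 : chainIdx X U d = chainIdx X U d' := congrArg Prod.fst heq
        have e2 : d - chainD X U (chainIdx X U d) = d' - chainD X U (chainIdx X U d') :=
          congrArg Prod.snd heq
        have h1 := hIlt d hd
        have h2 := hIlt d' hd'
        rw [e1] at h1 e2
        omega
      · intro d hd
        have h1 := hIlt d hd
        have h2 := hIgt d hd
        rw [chainD_succ] at h2
        set i := chainIdx X U d with hi
        set j := d - chainD X U i with hj
        have hjY : j < min (U i) (X i + 1 - U i) := by omega
        have hdn : d ≤ n := by
          simp only [hD, Finset.mem_filter, Finset.mem_Icc] at hd; omega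
        have hjU : j < U i := by have := min_le_left (U i) (X i + 1 - U i); omega
        have hUXi := hUX i
        show 1 ≤ j ∧ j ≤ X i ∧ j ≠ U i ∧ chainD X U i + min j (X i + 1 - j) ≤ n
        refine ⟨by omega, by omega, by omega, ?_⟩
        have : min j (X i + 1 - j) ≤ j := min_le_left _ _
        omega
    omega
lemma binom_step_id (p : ℝ) (m k : ℕ) :
    (m.choose (k+1) : ℝ) * p^(k+1) * (1-p)^(m-(k+1)) * (1-p)
      + (m.choose k : ℝ) * p^k * (1-p)^(m-k) * p
    = ((m+1).choose (k+1) : ℝ) * p^(k+1) * (1-p)^(m-k) := by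
  by_cases hkm : k + 1 ≤ m
  · have e1 : m - k = (m - (k+1)) + 1 := by omega
    rw [Nat.choose_succ_succ, e1, pow_succ]
    push_cast
    ring
  · by_cases h2 : k = m
    · subst h2
      simp [Nat.choose_succ_self, Nat.choose_self, pow_succ]
    · have h3 : m < k := by omega
      rw [Nat.choose_eq_zero_of_lt (by omega), Nat.choose_eq_zero_of_lt h3,
        Nat.choose_eq_zero_of_lt (by omega)]
      simp

lemma binom_pmf {Ω : Type*} [MeasureSpace Ω] [IsProbabilityMeasure (ℙ : Measure Ω)]
    (W : ℕ → Ω → ℕ) (hW01 : ∀ i ω, W i ω ≤ 1) (hWmeas : ∀ i, Measurable (W i))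
    (hindep : iIndepFun W ℙ)
    (p : ℝ) (hp1 : ∀ i, (ℙ {ω | W i ω = 1}).toReal = p) :
    ∀ m k : ℕ, (ℙ {ω | (∑ i ∈ Finset.range m, W i ω) = k}).toReal
      = (m.choose k : ℝ) * p ^ k * (1 - p) ^ (m - k) := by
  classical
  have hWm0 : ∀ i, {ω | W i ω = 0} = {ω | W i ω = 1}ᶜ := by
    intro i; ext ω
    have := hW01 i ω
    simp only [Set.mem_setOf_eq, Set.mem_compl_iff]
    omega
  have hp0 : ∀ i, (ℙ {ω | W i ω = 0}).toReal = 1 - p := by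
    intro i
    have hms : MeasurableSet {ω | W i ω = 1} := hWmeas i (measurableSet_singleton 1)
    rw [hWm0 i, prob_compl_eq_one_sub hms,
      ENNReal.toReal_sub_of_le prob_le_one (by simp), ENNReal.toReal_one, hp1 i]
  intro m
  induction m with
  | zero =>
      intro k
      cases k with
      | zero => simp
      | succ k =>
          have h : {ω : Ω | (∑ i ∈ Finset.range 0, W i ω) = k+1} = ∅ := by
            ext ω; simp
          rw [h]
          simp
  | succ m ih =>
      intro k
      have hNW : IndepFun (fun ω => ∑ i ∈ Finset.range m, W i ω) (W m) ℙ := by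
        have hd : Disjoint (Finset.range m) ({m} : Finset ℕ) := by simp
        have h := hindep.indepFun_finset (Finset.range m) {m} hd hWmeas
        have hF : Measurable fun v : ((i : (Finset.range m : Finset ℕ)) → ℕ) => ∑ i, v i := by
          apply Finset.measurable_sum
          intro i _
          exact measurable_pi_apply i
        have hG : Measurable fun v : ((i : ({m} : Finset ℕ)) → ℕ) =>
            v ⟨m, Finset.mem_singleton_self m⟩ := measurable_pi_apply _
        have h2 := h.comp hF hG
        convert h2 using 1
        funext ω
        show (∑ i ∈ Finset.range m, W i ω) = ∑ i : (Finset.range m : Finset ℕ), W i ω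
        exact (Finset.sum_coe_sort (Finset.range m) (fun i => W i ω)).symm
        rfl
      have hmul : ∀ a b : ℕ,
          ℙ ({ω | (∑ i ∈ Finset.range m, W i ω) = a} ∩ {ω | W m ω = b})
            = ℙ {ω | (∑ i ∈ Finset.range m, W i ω) = a} * ℙ {ω | W m ω = b} := by
        intro a b
        exact hNW.measure_inter_preimage_eq_mul {a} {b}
          (measurableSet_singleton a) (measurableSet_singleton b)
      have hNmeas : Measurable fun ω => ∑ i ∈ Finset.range m, W i ω := by
        apply Finset.measurable_sum; intro i _; exact hWmeas i
      cases k with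
      | zero =>
          have hset : {ω : Ω | (∑ i ∈ Finset.range (m+1), W i ω) = 0}
              = {ω | (∑ i ∈ Finset.range m, W i ω) = 0} ∩ {ω | W m ω = 0} := by
            ext ω
            simp only [Set.mem_setOf_eq, Set.mem_inter_iff, Finset.sum_range_succ]
            omega
          rw [hset, hmul 0 0, ENNReal.toReal_mul, ih 0, hp0 m]
          simp only [Nat.choose_zero_right, pow_zero, Nat.cast_one, one_mul, Nat.sub_zero]
          rw [pow_succ]
      | succ k =>
          have hset : {ω : Ω | (∑ i ∈ Finset.range (m+1), W i ω) = k+1}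
              = ({ω | (∑ i ∈ Finset.range m, W i ω) = k+1} ∩ {ω | W m ω = 0})
                ∪ ({ω | (∑ i ∈ Finset.range m, W i ω) = k} ∩ {ω | W m ω = 1}) := by
            ext ω
            have := hW01 m ω
            simp only [Set.mem_setOf_eq, Set.mem_inter_iff, Set.mem_union,
              Finset.sum_range_succ]
            omega
          have hdisj : Disjoint
              ({ω : Ω | (∑ i ∈ Finset.range m, W i ω) = k+1} ∩ {ω | W m ω = 0})
              ({ω | (∑ i ∈ Finset.range m, W i ω) = k} ∩ {ω | W m ω = 1}) := by
            rw [Set.disjoint_left]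
            rintro ω ⟨_, h0⟩ ⟨_, h1⟩
            simp only [Set.mem_setOf_eq] at h0 h1
            omega
          have hmeas2 : MeasurableSet
              ({ω : Ω | (∑ i ∈ Finset.range m, W i ω) = k} ∩ {ω | W m ω = 1}) :=
            (hNmeas (measurableSet_singleton k)).inter (hWmeas m (measurableSet_singleton 1))
          rw [hset, measure_union hdisj hmeas2,
            ENNReal.toReal_add (measure_ne_top _ _) (measure_ne_top _ _),
            hmul (k+1) 0, hmul k 1, ENNReal.toReal_mul, ENNReal.toReal_mul,
            ih (k+1), ih k, hp0 m, hp1 m, Nat.succ_sub_succ]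
          exact binom_step_id p m k
/-- With `Y_i = min{U_i, X_i - U_i + 1}` and `p = P(Y_i > 1)`, the number `R_n` of open
vertices of the chain within distance `n` of the root stochastically dominates a
`Binomial(⌊n/2⌋, p)` random variable. -/
theorem stmt4 {Ω : Type*} [MeasureSpace Ω] [IsProbabilityMeasure (ℙ : Measure Ω)]
    (X U : ℕ → Ω → ℕ) (hXmeas : ∀ i, Measurable (X i)) (hUmeas : ∀ i, Measurable (U i))
    (hX1 : ∀ i ω, 1 ≤ X i ω)
    (hUrange : ∀ i ω, 1 ≤ U i ω ∧ U i ω ≤ X i ω)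
    (hindep : iIndepFun (fun i ω => (X i ω, U i ω)) ℙ)
    (hident : ∀ i, Measure.map (fun ω => (X i ω, U i ω)) ℙ
      = Measure.map (fun ω => (X 0 ω, U 0 ω)) ℙ)
    (hUunif : ∀ i k j : ℕ, 1 ≤ j → j ≤ k →
      (ℙ {ω | X i ω = k ∧ U i ω = j}).toReal = (ℙ {ω | X i ω = k}).toReal / k)
    (p : ℝ) (hp : p = (ℙ {ω | 1 < min (U 0 ω) (X 0 ω - U 0 ω + 1)}).toReal) :
    ∀ n r : ℕ,
      (ℙ {ω | r ≤ openCount (fun k => X k ω) (fun k => U k ω) n}).toReal ≥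
        ∑ k ∈ Finset.Icc r (n / 2),
          ((n / 2).choose k : ℝ) * p ^ k * (1 - p) ^ (n / 2 - k) := by
  classical
  intro n r
  set m := n / 2 with hm
  -- Bernoulli indicators
  set g : ℕ × ℕ → ℕ := fun q => if 1 < min q.2 (q.1 + 1 - q.2) then 1 else 0 with hg
  have hgm : Measurable g := measurable_of_countable g
  set W : ℕ → Ω → ℕ := fun i ω => g (X i ω, U i ω) with hW
  have hW01 : ∀ i ω, W i ω ≤ 1 := by
    intro i ω
    simp only [hW, hg]
    split <;> omega
  have hWmeas : ∀ i, Measurable (W i) := fun i =>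
    hgm.comp ((hXmeas i).prodMk (hUmeas i))
  have hWindep : iIndepFun W ℙ :=
    hindep.comp (fun _ => g) (fun _ => hgm)
  -- each indicator has success probability p
  have hp1 : ∀ i, (ℙ {ω | W i ω = 1}).toReal = p := by
    intro i
    set sY : Set (ℕ × ℕ) := {q | 1 < min q.2 (q.1 + 1 - q.2)} with hsY
    have hsYm : MeasurableSet sY := (Set.to_countable sY).measurableSet
    have hseteq : ∀ j : ℕ, {ω | W j ω = 1} = (fun ω => (X j ω, U j ω)) ⁻¹' sY := by
      intro j
      ext ω
      simp only [hW, hg, hsY, Set.mem_setOf_eq, Set.mem_preimage]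
      split <;> simp_all
    rw [hseteq i, ← Measure.map_apply ((hXmeas i).prodMk (hUmeas i)) hsYm, hident i,
      Measure.map_apply ((hXmeas 0).prodMk (hUmeas 0)) hsYm, ← hseteq 0, hp]
    congr 2
    ext ω
    have h2 := (hUrange 0 ω).2
    have he : X 0 ω - U 0 ω + 1 = X 0 ω + 1 - U 0 ω := by omega
    simp only [Set.mem_setOf_eq, hW, hg, he]
    split <;> simp_all
  -- the count dominates the Bernoulli sum pointwise
  have hsub : {ω | r ≤ ∑ i ∈ Finset.range m, W i ω}
      ⊆ {ω | r ≤ openCount (fun k => X k ω) (fun k => U k ω) n} := by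
    intro ω hr
    simp only [Set.mem_setOf_eq] at hr ⊢
    have hcard : (∑ i ∈ Finset.range m, W i ω)
        = ((Finset.range m).filter
            (fun i => 1 < min (U i ω) (X i ω + 1 - U i ω))).card := by
      rw [Finset.card_filter]
    have hdet := det_count (fun k => X k ω) (fun k => U k ω)
      (fun i => hX1 i ω) (fun i => (hUrange i ω).1) (fun i => (hUrange i ω).2) n
    rw [hcard] at hr
    exact le_trans hr hdet
  -- the sum of the indicators is at most m
  have hNm : ∀ ω, (∑ i ∈ Finset.range m, W i ω) ≤ m := by
    intro ω
    calc (∑ i ∈ Finset.range m, W i ω) ≤ ∑ _i ∈ Finset.range m, 1 :=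
          Finset.sum_le_sum (fun i _ => hW01 i ω)
      _ = m := by simp
  have hNmeas : Measurable fun ω => ∑ i ∈ Finset.range m, W i ω := by
    apply Finset.measurable_sum; intro i _; exact hWmeas i
  have hunion : {ω | r ≤ ∑ i ∈ Finset.range m, W i ω}
      = ⋃ k ∈ Finset.Icc r m, {ω | (∑ i ∈ Finset.range m, W i ω) = k} := by
    ext ω
    simp only [Set.mem_setOf_eq, Set.mem_iUnion, Finset.mem_Icc, exists_prop]
    constructor
    · intro h
      exact ⟨∑ i ∈ Finset.range m, W i ω, ⟨h, hNm ω⟩, rfl⟩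
    · rintro ⟨k, ⟨h1, _⟩, h2⟩
      omega
  have hpmf := binom_pmf W hW01 hWmeas hWindep p hp1 m
  have hdisj : (↑(Finset.Icc r m) : Set ℕ).PairwiseDisjoint
      (fun k => {ω | (∑ i ∈ Finset.range m, W i ω) = k}) := by
    intro a _ b _ hab
    rw [Function.onFun, Set.disjoint_left]
    intro ω h1 h2
    simp only [Set.mem_setOf_eq] at h1 h2
    exact hab (h1 ▸ h2 ▸ rfl)
  calc ∑ k ∈ Finset.Icc r m, ((m.choose k : ℝ)) * p ^ k * (1 - p) ^ (m - k)
      = ∑ k ∈ Finset.Icc r m,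
          (ℙ {ω | (∑ i ∈ Finset.range m, W i ω) = k}).toReal :=
        Finset.sum_congr rfl (fun k _ => (hpmf k).symm)
    _ = (∑ k ∈ Finset.Icc r m, ℙ {ω | (∑ i ∈ Finset.range m, W i ω) = k}).toReal :=
        (ENNReal.toReal_sum (fun k _ => measure_ne_top _ _)).symm
    _ = (ℙ (⋃ k ∈ Finset.Icc r m, {ω | (∑ i ∈ Finset.range m, W i ω) = k})).toReal := by
        rw [measure_biUnion_finset hdisj
          (fun k _ => hNmeas (measurableSet_singleton k))]
    _ = (ℙ {ω | r ≤ ∑ i ∈ Finset.range m, W i ω}).toReal := by rw [hunion]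
    _ ≤ (ℙ {ω | r ≤ openCount (fun k => X k ω) (fun k => U k ω) n}).toReal :=
        ENNReal.toReal_mono (measure_ne_top _ _) (measure_mono hsub)
end

section
/- If L is slowly varying at infinity and F(n) = ∫_{n_0}^n L(x)/x dx diverges as n → ∞, then F is slowly varying at infinity, i.e. F(λn)/F(n) → 1 for every λ > 0. -/
open MeasureTheory Filter Real

/-- A positive function `L` is slowly varying at infinity if `L(λx)/L(x) → 1` for every `λ > 0`. -/
def SlowlyVarying (L : ℝ → ℝ) : Prop :=
  ∀ lam : ℝ, 0 < lam → Tendsto (fun x => L (lam * x) / L x) atTop (nhds 1)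

theorem stmt9_aux (L : ℝ → ℝ) (hLpos : ∀ x > 0, 0 < L x) (hL : SlowlyVarying L)
    (n₀ : ℝ) (hn₀ : 0 < n₀)
    (F : ℝ → ℝ) (hF : ∀ n : ℝ, F n = ∫ x in n₀..n, L x / x)
    (hdiv : Tendsto F atTop atTop) (lam : ℝ) (hlam : 1 ≤ lam) :
    Tendsto (fun n => F (lam * n) / F n) atTop (nhds 1) := by
  have hlam0 : 0 < lam := lt_of_lt_of_le one_pos hlam
  set f : ℝ → ℝ := fun x => L x / x with hf
  -- local integrability
  have hInt0 : ∀ b, n₀ ≤ b → IntervalIntegrable f volume n₀ b := by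
    intro b hb
    obtain ⟨c, hc1, hc2⟩ := ((hdiv.eventually_ge_atTop 1).and (eventually_ge_atTop b)).exists
    have hcI : IntervalIntegrable f volume n₀ c := by
      by_contra h
      rw [hF c, intervalIntegral.integral_undef h] at hc1
      linarith
    exact hcI.mono_set (Set.uIcc_subset_uIcc Set.left_mem_uIcc
      (Set.mem_uIcc.mpr (Or.inl ⟨hb, hc2⟩)))
  have hInt : ∀ a b, n₀ ≤ a → n₀ ≤ b → IntervalIntegrable f volume a b :=
    fun a b ha hb => (hInt0 a ha).symm.trans (hInt0 b hb)
  -- difference formula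
  have hFd : ∀ a b, n₀ ≤ a → n₀ ≤ b → F b - F a = ∫ x in a..b, f x := by
    intro a b ha hb
    have := intervalIntegral.integral_add_adjacent_intervals (hInt0 a ha) (hInt a b ha hb)
    rw [hF a, hF b]
    linarith
  -- monotonicity and nonnegativity
  have hmono : ∀ a b, n₀ ≤ a → a ≤ b → F a ≤ F b := by
    intro a b ha hab
    have h0 : (0:ℝ) ≤ ∫ x in a..b, f x := by
      apply intervalIntegral.integral_nonneg hab
      intro x hx
      have hx0 : 0 < x := lt_of_lt_of_le hn₀ (le_trans ha hx.1)
      exact div_nonneg (hLpos x hx0).le hx0.le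
    have := hFd a b ha (le_trans ha hab)
    linarith
  have hF0 : ∀ a, n₀ ≤ a → 0 ≤ F a := by
    intro a ha
    have : F n₀ = 0 := by rw [hF n₀, intervalIntegral.integral_same]
    have := hmono n₀ a le_rfl ha
    linarith
  -- substitution formula
  have hsub : ∀ m, n₀ ≤ m → F (lam * m) - F m = lam * ∫ t in m / lam..m, f (lam * t) := by
    intro m hm
    have hm' : n₀ ≤ lam * m := le_trans hm (le_mul_of_one_le_left (le_trans hn₀.le hm) hlam)
    rw [hFd m (lam * m) hm hm', intervalIntegral.integral_comp_mul_left f hlam0.ne',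
      mul_div_cancel₀ m hlam0.ne', smul_eq_mul, ← mul_assoc, mul_inv_cancel₀ hlam0.ne', one_mul]
  -- key inequality
  have hKey : ∀ ε : ℝ, 0 < ε → ∃ N : ℝ, ∀ m, max N n₀ ≤ m / lam →
      F (lam * m) - F m ≤ (1 + ε) * (F m - F (m / lam)) := by
    intro ε hε
    have h1 : ∀ᶠ x in atTop, L (lam * x) / L x < 1 + ε :=
      (hL lam hlam0).eventually_lt_const (by linarith)
    obtain ⟨N, hN⟩ := eventually_atTop.mp h1
    refine ⟨N, fun m hm => ?_⟩
    set a := m / lam with ha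
    have haN : N ≤ a := le_trans (le_max_left _ _) hm
    have han₀ : n₀ ≤ a := le_trans (le_max_right _ _) hm
    have ha0 : 0 < a := lt_of_lt_of_le hn₀ han₀
    have hm0 : 0 < m := by
      have := ha0
      rw [ha, div_pos_iff] at this
      rcases this with ⟨h1, _⟩ | ⟨_, h2⟩
      · exact h1
      · linarith
    have ham : a ≤ m := by
      rw [ha]
      exact div_le_self hm0.le hlam
    have hmn₀ : n₀ ≤ m := le_trans han₀ ham
    -- integrability of composed function
    have hint1 : IntervalIntegrable (fun t => f (lam * t)) volume a m := by
      have := (hInt m (lam * m) hmn₀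
        (le_trans hmn₀ (le_mul_of_one_le_left hm0.le hlam))).comp_mul_left (c := lam)
      rwa [mul_div_cancel_left₀ m hlam0.ne'] at this
    have hint2 : IntervalIntegrable (fun t => ((1 + ε) / lam) * f t) volume a m :=
      (hInt a m han₀ hmn₀).const_mul _
    have hpt : ∀ t ∈ Set.Icc a m, f (lam * t) ≤ ((1 + ε) / lam) * f t := by
      intro t ht
      have ht0 : 0 < t := lt_of_lt_of_le ha0 ht.1
      have htN : N ≤ t := le_trans haN ht.1
      have hLt : L (lam * t) ≤ (1 + ε) * L t := by
        have := hN t htN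
        rw [div_lt_iff₀ (hLpos t ht0)] at this
        linarith
      have hlt0 : 0 < lam * t := by positivity
      calc f (lam * t) = L (lam * t) / (lam * t) := rfl
        _ ≤ ((1 + ε) * L t) / (lam * t) := by gcongr
        _ = ((1 + ε) / lam) * (L t / t) := by field_simp
    have hintle := intervalIntegral.integral_mono_on ham hint1 hint2 hpt
    rw [intervalIntegral.integral_const_mul] at hintle
    have hFda : F m - F a = ∫ x in a..m, f x := hFd a m han₀ hmn₀
    rw [hsub m hmn₀]
    calc lam * ∫ t in a..m, f (lam * t) ≤ lam * ((1 + ε) / lam * ∫ x in a..m, f x) :=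
          mul_le_mul_of_nonneg_left hintle hlam0.le
      _ = (1 + ε) * (F m - F a) := by rw [← hFda]; field_simp
  -- nonnegativity of increments
  have hDnn : ∀ m, n₀ ≤ m → 0 ≤ F (lam * m) - F m := by
    intro m hm
    have := hmono m (lam * m) hm (le_mul_of_one_le_left (le_trans hn₀.le hm) hlam)
    linarith
  -- the iterated inequality
  have hclaim : ∀ ε : ℝ, 0 < ε → ∃ N : ℝ, ∀ k : ℕ, ∀ n : ℝ, max N n₀ ≤ n / lam ^ k →
      (k : ℝ) * (F (lam * n) - F n) ≤ (1 + ε) ^ k * (F n - F (n / lam ^ k)) := by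
    intro ε hε
    obtain ⟨N, hN⟩ := hKey ε hε
    refine ⟨N, fun k => ?_⟩
    induction k with
    | zero => intro n hn; simp
    | succ k ih =>
      intro n hn
      have hM0 : 0 < max N n₀ := lt_of_lt_of_le hn₀ (le_max_right _ _)
      have hn0 : 0 < n := by
        have h := lt_of_lt_of_le hM0 hn
        rw [div_pos_iff] at h
        rcases h with ⟨h1, _⟩ | ⟨_, h2⟩
        · exact h1
        · exact absurd h2 (not_lt.mpr (pow_pos hlam0 _).le)
      have hll : lam ≤ lam ^ (k + 1) := le_self_pow₀ hlam (Nat.succ_ne_zero k)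
      have hstep : n / lam ^ (k + 1) ≤ n / lam :=
        div_le_div_of_nonneg_left hn0.le hlam0 hll
      have hn1 : max N n₀ ≤ n / lam := le_trans hn hstep
      have hdd : n / lam / lam ^ k = n / lam ^ (k + 1) := by
        rw [div_div, ← pow_succ']
      have ihh := ih (n / lam) (by rw [hdd]; exact hn)
      rw [hdd, mul_div_cancel₀ n hlam0.ne'] at ihh
      have hkey := hN n hn1
      have hn₀1 : n₀ ≤ n / lam := le_trans (le_max_right _ _) hn1
      have hn₀k : n₀ ≤ n / lam ^ (k + 1) := le_trans (le_max_right _ _) hn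
      have hA : 0 ≤ F n - F (n / lam) := by
        have := hmono (n / lam) n hn₀1 (div_le_self hn0.le hlam)
        linarith
      have hB : 0 ≤ F (n / lam) - F (n / lam ^ (k + 1)) := by
        have := hmono (n / lam ^ (k + 1)) (n / lam) hn₀k hstep
        linarith
      have hP : (1:ℝ) ≤ (1 + ε) ^ k := one_le_pow₀ (by linarith)
      have hsplit : F n - F (n / lam ^ (k + 1)) =
          (F n - F (n / lam)) + (F (n / lam) - F (n / lam ^ (k + 1))) := by ring
      rw [hsplit, pow_succ]
      push_cast
      nlinarith [mul_le_mul_of_nonneg_left hkey (Nat.cast_nonneg k : (0:ℝ) ≤ (k:ℝ)),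
        mul_le_mul_of_nonneg_left ihh (by linarith : (0:ℝ) ≤ 1 + ε),
        mul_le_mul_of_nonneg_left hA (by nlinarith : (0:ℝ) ≤ (1 + ε) * ((1 + ε) ^ k - 1))]
  -- conclusion
  rw [Metric.tendsto_nhds]
  intro δ hδ
  obtain ⟨k, hk⟩ := exists_nat_gt (2 / δ)
  have hk0 : 0 < (k : ℝ) := lt_trans (by positivity) hk
  have hkne : (k : ℝ) ≠ 0 := hk0.ne'
  set ε : ℝ := (2:ℝ) ^ ((k : ℝ)⁻¹) - 1 with hεdef
  have hε2 : (1:ℝ) < (2:ℝ) ^ ((k : ℝ)⁻¹) := by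
    rw [show (1:ℝ) = (2:ℝ) ^ (0:ℝ) by rw [Real.rpow_zero]]
    exact Real.rpow_lt_rpow_left_iff (by norm_num) |>.mpr (by positivity)
  have hε : 0 < ε := by rw [hεdef]; linarith
  have hpow : (1 + ε) ^ k = 2 := by
    rw [hεdef]
    have : (1 : ℝ) + ((2:ℝ) ^ ((k : ℝ)⁻¹) - 1) = (2:ℝ) ^ ((k : ℝ)⁻¹) := by ring
    rw [this, ← Real.rpow_natCast ((2:ℝ) ^ ((k : ℝ)⁻¹)) k, ← Real.rpow_mul (by norm_num),
      inv_mul_cancel₀ hkne, Real.rpow_one]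
  obtain ⟨N, hN⟩ := hclaim ε hε
  have hlamk : 0 < lam ^ k := pow_pos hlam0 k
  filter_upwards [eventually_ge_atTop (lam ^ k * max N n₀), eventually_ge_atTop n₀,
    hdiv.eventually_gt_atTop 0] with n hn1 hn2 hn3
  have hnk : max N n₀ ≤ n / lam ^ k := (le_div_iff₀ hlamk).mpr (by linarith [hn1])
  have hclaimn := hN k n hnk
  rw [hpow] at hclaimn
  have hFk : 0 ≤ F (n / lam ^ k) := hF0 _ (le_trans (le_max_right _ _) hnk)
  have hD : 0 ≤ F (lam * n) - F n := hDnn n hn2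
  have hDk : (k : ℝ) * (F (lam * n) - F n) ≤ 2 * F n := by nlinarith
  have heq : F (lam * n) / F n - 1 = (F (lam * n) - F n) / F n := by
    field_simp
  rw [Real.dist_eq, heq, abs_of_nonneg (div_nonneg hD hn3.le)]
  have h2k : (F (lam * n) - F n) / F n ≤ 2 / k := by
    rw [div_le_div_iff₀ hn3 hk0]
    nlinarith
  have : 2 / (k:ℝ) < δ := by
    rw [div_lt_iff₀ hk0]
    rw [div_lt_iff₀ hδ] at hk
    linarith
  linarith

/-- If `L` is slowly varying and `F(n) = ∫_{n₀}^n L(x)/x dx` diverges, then `F` is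
slowly varying at infinity. -/
theorem stmt9 (L : ℝ → ℝ) (hLpos : ∀ x > 0, 0 < L x) (hL : SlowlyVarying L)
    (n₀ : ℝ) (hn₀ : 0 < n₀)
    (F : ℝ → ℝ) (hF : ∀ n : ℝ, F n = ∫ x in n₀..n, L x / x)
    (hdiv : Tendsto F atTop atTop) :
    ∀ lam : ℝ, 0 < lam → Tendsto (fun n => F (lam * n) / F n) atTop (nhds 1) := by
  intro lam hlam
  rcases le_or_gt 1 lam with h | h
  · exact stmt9_aux L hLpos hL n₀ hn₀ F hF hdiv lam h
  · have h1 : (1:ℝ) ≤ lam⁻¹ := by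
      rw [le_inv_comm₀ one_pos hlam]
      simpa using h.le
    have haux := stmt9_aux L hLpos hL n₀ hn₀ F hF hdiv lam⁻¹ h1
    have h2 : Tendsto (fun n : ℝ => lam * n) atTop atTop :=
      Tendsto.const_mul_atTop hlam tendsto_id
    have hcomp : Tendsto (fun n => F n / F (lam * n)) atTop (nhds 1) := by
      have := haux.comp h2
      simpa [Function.comp_def, inv_mul_cancel_left₀ hlam.ne'] using this
    have hinv := hcomp.inv₀ one_ne_zero
    rw [inv_one] at hinv
    exact hinv.congr fun n => inv_div _ _
end

section
/- With ξ, ξ̂ as above and c > 0 fixed, there is a constant C > 0 such that E(1 − (1 − c/n)^{ξ̂}) ≤ C n^{1-α} L_1(n) for all sufficiently large n. -/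
open MeasureTheory ProbabilityTheory Filter Real

lemma lemB {Ω : Type*} [MeasureSpace Ω] [IsProbabilityMeasure (ℙ : Measure Ω)]
    (X : Ω → ℕ) (hX : Measurable X) :
    HasSum (fun i => (ℙ {ω | X ω = i}).toReal) 1 := by
  have hd : Pairwise (Function.onFun Disjoint (fun i => {ω | X ω = i})) := by
    intro i j hij
    simp only [Function.onFun, Set.disjoint_left]
    rintro ω (h1 : X ω = i) (h2 : X ω = j)
    exact hij (h1 ▸ h2 ▸ rfl)
  have hm : ∀ i, MeasurableSet {ω | X ω = i} := fun i => hX (measurableSet_singleton i)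
  have htot : (∑' i, ℙ {ω | X ω = i}) = 1 := by
    rw [← measure_iUnion hd hm]
    have : (⋃ i, {ω | X ω = i}) = Set.univ := by
      ext ω; simp
    rw [this, measure_univ]
  have hne : ∀ i, ℙ {ω | X ω = i} ≠ ⊤ := fun i => measure_ne_top _ _
  have hsummable : Summable (fun i => (ℙ {ω | X ω = i}).toReal) :=
    ENNReal.summable_toReal (by rw [htot]; exact ENNReal.one_ne_top)
  have : ∑' i, (ℙ {ω | X ω = i}).toReal = 1 := by
    rw [← ENNReal.tsum_toReal_eq hne, htot, ENNReal.toReal_one]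
  exact this ▸ hsummable.hasSum

lemma lemA {Ω : Type*} [MeasureSpace Ω] [IsProbabilityMeasure (ℙ : Measure Ω)]
    (X : Ω → ℕ) (hX : Measurable X) (f : ℕ → ℝ) (B : ℝ) (hB : ∀ i, |f i| ≤ B) :
    ∫ ω, f (X ω) = ∑' i, (ℙ {ω | X ω = i}).toReal * f i := by
  have hfm : AEStronglyMeasurable f (Measure.map X ℙ) :=
    (measurable_of_countable f).stronglyMeasurable.aestronglyMeasurable
  have hf : Integrable (fun ω => f (X ω)) ℙ := by
    refine Integrable.mono' (integrable_const B) ?_ (ae_of_all _ fun ω => hB (X ω))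
    exact ((measurable_of_countable f).comp hX).aestronglyMeasurable
  have hint : Integrable f (Measure.map X ℙ) :=
    (integrable_map_measure hfm hX.aemeasurable).mpr hf
  rw [← integral_map hX.aemeasurable hfm, integral_countable' hint]
  congr 1; funext i
  rw [measureReal_def, Measure.map_apply hX (measurableSet_singleton i), smul_eq_mul]
  rfl

lemma tailBound (α : ℝ) (hα1 : 1 < α) (L₁ : ℝ → ℝ) (hLpos : ∀ x > 0, 0 < L₁ x)
    (p q : ℕ → ℝ) (hp : ∀ i, 0 ≤ p i) (hqsum : HasSum q 1)
    (hq : ∀ i, q i = i * p i)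
    (hA : ∀ m : ℕ, 1 ≤ m → ∑ i ∈ Finset.range (m+1), (i:ℝ)^2 * p i
      = (m : ℝ) ^ ((2 : ℝ) - α) * L₁ m)
    (ρ K X₀ : ℝ) (hρpos : 0 < ρ) (hρlt : ρ < 1) (hX₀1 : 1 ≤ X₀)
    (hKρ : K * (2:ℝ) ^ ((1:ℝ) - α) = ρ) (hKpos : 0 < K)
    (hX₀ : ∀ x, X₀ ≤ x → L₁ (2 * x) ≤ K * L₁ x)
    (n : ℕ) (hn1 : 1 ≤ n) (hnX : X₀ ≤ (n:ℝ)) :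
    1 - ∑ i ∈ Finset.range (n+1), q i
      ≤ (2 * ρ / (1 - ρ)) * (n : ℝ) ^ ((1 : ℝ) - α) * L₁ n := by
  have hq0 : ∀ i, 0 ≤ q i := fun i => (hq i) ▸ mul_nonneg (Nat.cast_nonneg i) (hp i)
  set M : ℝ → ℝ := fun x => x ^ ((2:ℝ) - α) * L₁ x with hMdef
  set S : ℕ → ℝ := fun m => ∑ i ∈ Finset.range (m+1), q i with hSdef
  set T : ℕ → ℝ := fun m => 1 - S m with hTdef
  have hT0 : Tendsto T atTop (nhds 0) := by
    have h1 : Tendsto (fun m => ∑ i ∈ Finset.range m, q i) atTop (nhds 1) :=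
      hqsum.tendsto_sum_nat
    have h2 : Tendsto S atTop (nhds 1) := h1.comp (tendsto_add_atTop_nat 1)
    have := (tendsto_const_nhds (x := (1:ℝ)) (f := atTop)).sub h2
    simpa using this
  have hMpos : ∀ x : ℝ, 0 < x → 0 < M x := fun x hx =>
    mul_pos (Real.rpow_pos_of_pos hx _) (hLpos x hx)
  have hM2 : ∀ x : ℝ, X₀ ≤ x → M (2 * x) ≤ 2 * ρ * M x := by
    intro x hx
    have hxpos : 0 < x := lt_of_lt_of_le one_pos (le_trans hX₀1 hx)
    have hL2 : L₁ (2 * x) ≤ K * L₁ x := hX₀ x hx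
    have h2a : (2:ℝ) ^ ((2:ℝ) - α) = 2 * (2:ℝ) ^ ((1:ℝ) - α) := by
      rw [show (2:ℝ) - α = 1 + (1 - α) by ring, Real.rpow_add two_pos, Real.rpow_one]
    have hr : (2 * x) ^ ((2:ℝ) - α) = 2 * (2:ℝ) ^ ((1:ℝ) - α) * x ^ ((2:ℝ) - α) := by
      rw [Real.mul_rpow (by norm_num) hxpos.le, h2a]
    have hxp : (0:ℝ) < x ^ ((2:ℝ) - α) := Real.rpow_pos_of_pos hxpos _
    have hLx : 0 < L₁ x := hLpos x hxpos
    calc M (2*x) = (2 * x) ^ ((2:ℝ) - α) * L₁ (2*x) := rfl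
      _ ≤ (2 * x) ^ ((2:ℝ) - α) * (K * L₁ x) := by
          apply mul_le_mul_of_nonneg_left hL2 (Real.rpow_nonneg (by positivity) _)
      _ = 2 * (K * (2:ℝ) ^ ((1:ℝ) - α)) * (x ^ ((2:ℝ) - α) * L₁ x) := by rw [hr]; ring
      _ = 2 * ρ * M x := by rw [hKρ]
  have hTrec : ∀ m : ℕ, 1 ≤ m → T m ≤ M (2 * (m:ℝ)) / m + T (2 * m) := by
    intro m hm
    have hmpos : (0:ℝ) < m := by exact_mod_cast hm
    have hsplit : S (2*m) - S m = ∑ i ∈ Finset.Ico (m+1) (2*m+1), q i := by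
      have := Finset.sum_Ico_consecutive q (by omega : 0 ≤ m+1) (by omega : m+1 ≤ 2*m+1)
      rw [hSdef]; simp only [Finset.range_eq_Ico]; linarith
    have hb : ∑ i ∈ Finset.Ico (m+1) (2*m+1), q i
        ≤ (∑ i ∈ Finset.Ico (m+1) (2*m+1), (i:ℝ)^2 * p i) / m := by
      rw [Finset.sum_div]
      apply Finset.sum_le_sum
      intro i hi
      obtain ⟨hi1, hi2⟩ := Finset.mem_Ico.mp hi
      have him : (m:ℝ) ≤ (i:ℝ) := by exact_mod_cast Nat.le_of_succ_le hi1
      rw [hq i, le_div_iff₀ hmpos]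
      have : (i:ℝ) * p i * (m:ℝ) ≤ (i:ℝ) * p i * (i:ℝ) :=
        mul_le_mul_of_nonneg_left him (mul_nonneg (Nat.cast_nonneg i) (hp i))
      nlinarith [hp i, Nat.cast_nonneg (α := ℝ) i]
    have hAdiff : ∑ i ∈ Finset.Ico (m+1) (2*m+1), (i:ℝ)^2 * p i = M (2*(m:ℝ)) - M m := by
      have h1 := hA m hm
      have h2 := hA (2*m) (by omega)
      have h3 := Finset.sum_Ico_consecutive (fun i => (i:ℝ)^2 * p i)
        (by omega : 0 ≤ m+1) (by omega : m+1 ≤ 2*m+1)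
      simp only [← Finset.range_eq_Ico] at h3
      rw [h1, h2] at h3
      have hcast : ((2*m : ℕ) : ℝ) = 2 * (m:ℝ) := by push_cast; ring
      rw [hcast] at h3
      rw [hMdef]; simp only []; linarith
    have hMm : 0 < M m := hMpos m hmpos
    have hd : T m - T (2*m) = S (2*m) - S m := by rw [hTdef]; ring
    rw [hsplit] at hd
    have h4 : (M (2*(m:ℝ)) - M m)/m ≤ M (2*(m:ℝ))/m := by gcongr; linarith
    have h5 : T m - T (2*m) ≤ (M (2*(m:ℝ)) - M m) / m := by rw [hd, ← hAdiff]; exact hb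
    linarith
  -- iteration of hM2 along powers of 2
  have hnpos : (0:ℝ) < (n:ℝ) := by exact_mod_cast hn1
  have hMiter : ∀ j : ℕ, M ((2:ℝ)^(j+1) * n) ≤ (2*ρ)^j * M (2 * n) := by
    intro j
    induction j with
    | zero => simp
    | succ j ih =>
      have hx : X₀ ≤ (2:ℝ)^(j+1) * n := by
        have h1 : (1:ℝ) ≤ (2:ℝ)^(j+1) := one_le_pow₀ (by norm_num)
        nlinarith
      have := hM2 _ hx
      have hrw : (2:ℝ) * ((2:ℝ)^(j+1) * n) = (2:ℝ)^(j+1+1) * n := by ring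
      rw [hrw] at this
      calc M ((2:ℝ)^(j+1+1) * n) ≤ 2*ρ * M ((2:ℝ)^(j+1)*n) := this
        _ ≤ 2*ρ * ((2*ρ)^j * M (2*n)) := by
            apply mul_le_mul_of_nonneg_left ih (by positivity)
        _ = (2*ρ)^(j+1) * M (2*n) := by ring
  -- main iteration
  have hMn2nonneg : 0 ≤ M (2*(n:ℝ))/n := le_of_lt (div_pos (hMpos _ (by positivity)) hnpos)
  have hTiter : ∀ J : ℕ, T n ≤ (M (2*(n:ℝ))/n) * (∑ j ∈ Finset.range J, ρ^j) + T (2^J * n) := by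
    intro J
    induction J with
    | zero => simp
    | succ J ih =>
      have hm1 : 1 ≤ 2^J * n := Nat.mul_pos (pow_pos (by norm_num) J) hn1
      have hrec := hTrec (2^J * n) hm1
      have hcast : ((2^J * n : ℕ) : ℝ) = (2:ℝ)^J * (n:ℝ) := by push_cast; ring
      rw [hcast] at hrec
      have hM1 : (2:ℝ) * ((2:ℝ)^J * (n:ℝ)) = (2:ℝ)^(J+1) * n := by ring
      have hMb := hMiter J
      have hnat : (2 * (2^J * n) : ℕ) = 2^(J+1) * n := by rw [pow_succ]; ring
      rw [hM1, hnat] at hrec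
      have hdivpos : (0:ℝ) < (2:ℝ)^J * (n:ℝ) := by positivity
      have h1 : M ((2:ℝ)^(J+1) * n) / ((2:ℝ)^J * (n:ℝ))
          ≤ ((2*ρ)^J * M (2*(n:ℝ))) / ((2:ℝ)^J * (n:ℝ)) := by gcongr
      have h2 : ((2*ρ)^J * M (2*(n:ℝ))) / ((2:ℝ)^J * (n:ℝ)) = ρ^J * (M (2*(n:ℝ))/n) := by
        rw [mul_pow]
        field_simp
      have hstep : M ((2:ℝ)^(J+1) * n) / ((2:ℝ)^J * (n:ℝ)) ≤ ρ^J * (M (2*(n:ℝ))/n) :=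
        h1.trans_eq h2
      calc T n ≤ (M (2*(n:ℝ))/n) * (∑ j ∈ Finset.range J, ρ^j) + T (2^J * n) := ih
        _ ≤ (M (2*(n:ℝ))/n) * (∑ j ∈ Finset.range J, ρ^j)
            + (M ((2:ℝ)^(J+1) * n) / ((2:ℝ)^J * (n:ℝ)) + T (2^(J+1) * n)) := by linarith
        _ ≤ (M (2*(n:ℝ))/n) * (∑ j ∈ Finset.range J, ρ^j)
            + (ρ^J * (M (2*(n:ℝ))/n) + T (2^(J+1) * n)) := by linarith
        _ = (M (2*(n:ℝ))/n) * (∑ j ∈ Finset.range (J+1), ρ^j) + T (2^(J+1) * n) := by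
            rw [Finset.sum_range_succ]; ring
  -- geometric bound and limit
  have hgeom : ∀ J : ℕ, ∑ j ∈ Finset.range J, ρ^j ≤ 1/(1-ρ) := by
    intro J
    have := Summable.sum_le_tsum (Finset.range J) (fun i _ => pow_nonneg hρpos.le i)
      (summable_geometric_of_lt_one hρpos.le hρlt)
    rwa [tsum_geometric_of_lt_one hρpos.le hρlt, ← one_div] at this
  have hkey : ∀ J : ℕ, T n ≤ (M (2*(n:ℝ))/n) * (1/(1-ρ)) + T (2^J * n) := by
    intro J
    have h1 := hTiter J
    have h2 := hgeom J
    nlinarith [hMn2nonneg]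
  have hcomp : Tendsto (fun J : ℕ => T (2^J * n)) atTop (nhds 0) := by
    apply hT0.comp
    apply tendsto_atTop_mono (fun J => Nat.le_mul_of_pos_right _ hn1)
    exact tendsto_pow_atTop_atTop_of_one_lt (by norm_num)
  have hlim : Tendsto (fun J : ℕ => (M (2*(n:ℝ))/n) * (1/(1-ρ)) + T (2^J * n)) atTop
      (nhds ((M (2*(n:ℝ))/n) * (1/(1-ρ)))) := by
    simpa using (tendsto_const_nhds (x := (M (2*(n:ℝ))/n) * (1/(1-ρ))) (f := atTop)).add hcomp
  have hTn : T n ≤ (M (2*(n:ℝ))/n) * (1/(1-ρ)) := ge_of_tendsto' hlim hkey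
  -- final algebra
  have hM2n : M (2*(n:ℝ)) ≤ 2*ρ * M n := hM2 n hnX
  have hMn : M (n:ℝ) = (n:ℝ)^((1:ℝ)-α) * L₁ n * n := by
    rw [hMdef]
    simp only []
    rw [show (2:ℝ) - α = (1-α) + 1 by ring, Real.rpow_add hnpos, Real.rpow_one]
    ring
  have h1ρ : 0 < 1 - ρ := by linarith
  have hLn : 0 < L₁ n := hLpos _ hnpos
  have hrp : 0 < (n:ℝ)^((1:ℝ)-α) := Real.rpow_pos_of_pos hnpos _
  have hMnn : M (2*(n:ℝ))/n ≤ 2*ρ*((n:ℝ)^((1:ℝ)-α) * L₁ n) := by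
    rw [div_le_iff₀ hnpos]
    rw [hMn] at hM2n
    nlinarith [hρpos]
  have hfin : T n ≤ (2*ρ/(1-ρ)) * ((n:ℝ)^((1:ℝ)-α) * L₁ n) := by
    calc T n ≤ (M (2*(n:ℝ))/n) * (1/(1-ρ)) := hTn
      _ ≤ (2*ρ*((n:ℝ)^((1:ℝ)-α) * L₁ n)) * (1/(1-ρ)) :=
          mul_le_mul_of_nonneg_right hMnn (by positivity)
      _ = (2*ρ/(1-ρ)) * ((n:ℝ)^((1:ℝ)-α) * L₁ n) := by field_simp
  show T n ≤ _
  rw [mul_assoc]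
  exact hfin

lemma intBound {Ω : Type*} [MeasureSpace Ω] [IsProbabilityMeasure (ℙ : Measure Ω)]
    (ξ ξhat : Ω → ℕ) (hmeasξhat : Measurable ξhat)
    (hbias : ∀ i : ℕ, (ℙ {ω | ξhat ω = i}).toReal = i * (ℙ {ω | ξ ω = i}).toReal)
    (hqsum : HasSum (fun i => (ℙ {ω | ξhat ω = i}).toReal) 1)
    (c : ℝ) (hc : 0 < c) (n : ℕ) (hn1 : 1 ≤ n) (hcn : c ≤ (n:ℝ)) :
    ∫ ω, (1 - (1 - c / (n : ℝ)) ^ (ξhat ω))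
      ≤ (1 - ∑ i ∈ Finset.range (n+1), (ℙ {ω | ξhat ω = i}).toReal)
        + (c/n) * ∑ i ∈ Finset.range (n+1), (i:ℝ)^2 * (ℙ {ω | ξ ω = i}).toReal := by
  set p : ℕ → ℝ := fun i => (ℙ {ω | ξ ω = i}).toReal with hpdef
  set q : ℕ → ℝ := fun i => (ℙ {ω | ξhat ω = i}).toReal with hqdef
  have hq0 : ∀ i, 0 ≤ q i := fun i => ENNReal.toReal_nonneg
  have hnpos : (0:ℝ) < n := by exact_mod_cast hn1
  set x : ℝ := 1 - c / n with hxdef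
  have hx0 : 0 ≤ x := by
    rw [hxdef]
    have : c / n ≤ 1 := (div_le_one hnpos).mpr hcn
    linarith
  have hx1 : x ≤ 1 := by
    rw [hxdef]
    have : 0 ≤ c / n := by positivity
    linarith
  set g : ℕ → ℝ := fun i => 1 - x ^ i with hgdef
  have hg0 : ∀ i, 0 ≤ g i := fun i => by
    have := pow_le_one₀ hx0 hx1 (n := i); simp [hgdef]; linarith
  have hg1 : ∀ i, g i ≤ 1 := fun i => by
    have := pow_nonneg hx0 i; simp [hgdef]; linarith
  have hgB : ∀ i, |g i| ≤ 1 := fun i => abs_le.mpr ⟨by linarith [hg0 i], hg1 i⟩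
  have hglin : ∀ i : ℕ, g i ≤ c * i / n := by
    intro i
    have hb : 1 + (i:ℝ) * (-(c/n)) ≤ (1 + (-(c/n))) ^ i := by
      apply one_add_mul_le_pow
      have : c / n ≤ 1 := (div_le_one hnpos).mpr hcn
      linarith
    have : (1 + (-(c/n))) ^ i = x ^ i := by rw [hxdef]; ring_nf
    rw [this] at hb
    rw [hgdef]
    simp only []
    have : c * i / n = (i:ℝ) * (c/n) := by ring
    rw [this]
    linarith
  -- the integral as a tsum
  have hI : ∫ ω, (1 - (1 - c / (n : ℝ)) ^ (ξhat ω)) = ∑' i, q i * g i := by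
    rw [show (fun ω => (1 - (1 - c / (n:ℝ)) ^ (ξhat ω))) = fun ω => g (ξhat ω) by rfl]
    exact lemA ξhat hmeasξhat g 1 hgB
  -- majorant
  set h : ℕ → ℝ := fun i => q i + (if i ∈ Finset.range (n+1) then (c*i/n - 1) * q i else 0)
    with hhdef
  have hle : ∀ i, q i * g i ≤ h i := by
    intro i
    rw [hhdef]
    simp only []
    by_cases hi : i ∈ Finset.range (n+1)
    · rw [if_pos hi]
      have := mul_le_mul_of_nonneg_left (hglin i) (hq0 i)
      nlinarith [hq0 i]
    · rw [if_neg hi]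
      have := mul_le_mul_of_nonneg_left (hg1 i) (hq0 i)
      simpa using this
  have hsum_corr : Summable (fun i => (if i ∈ Finset.range (n+1) then (c*i/n - 1) * q i else 0)) :=
    summable_of_ne_finset_zero (s := Finset.range (n+1)) (fun i hi => if_neg hi)
  have hsumh : Summable h := hqsum.summable.add hsum_corr
  have hsumqg : Summable (fun i => q i * g i) := by
    apply Summable.of_nonneg_of_le (fun i => mul_nonneg (hq0 i) (hg0 i)) hle hsumh
  have htsum_h : ∑' i, h i = 1 + ∑ i ∈ Finset.range (n+1), (c*i/n - 1) * q i := by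
    rw [hhdef, Summable.tsum_add hqsum.summable hsum_corr, hqsum.tsum_eq]
    congr 1
    exact tsum_eq_sum (fun i hi => if_neg hi) |>.trans
      (Finset.sum_congr rfl (fun i hi => if_pos hi))
  have hfinal : ∑' i, q i * g i ≤ 1 + ∑ i ∈ Finset.range (n+1), (c*i/n - 1) * q i := by
    rw [← htsum_h]
    exact Summable.tsum_le_tsum hle hsumqg hsumh
  rw [hI]
  apply le_trans hfinal
  have hexp : ∑ i ∈ Finset.range (n+1), (c*i/n - 1) * q i
      = (c/n) * ∑ i ∈ Finset.range (n+1), (i:ℝ)^2 * p i - ∑ i ∈ Finset.range (n+1), q i := by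
    rw [Finset.mul_sum, ← Finset.sum_sub_distrib]
    apply Finset.sum_congr rfl
    intro i hi
    have hqp : q i = (i:ℝ) * p i := hbias i
    rw [hqp]
    ring
  rw [hexp]
  linarith

lemma truncSum {Ω : Type*} [MeasureSpace Ω] [IsProbabilityMeasure (ℙ : Measure Ω)]
    (α : ℝ) (L₁ : ℝ → ℝ) (ξ : Ω → ℕ) (hmeasξ : Measurable ξ)
    (htrunc : ∀ n : ℕ, 1 ≤ n →
      ∫ ω in {ω | ξ ω ≤ n}, ((ξ ω : ℝ)) ^ 2 = (n : ℝ) ^ ((2 : ℝ) - α) * L₁ n)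
    (m : ℕ) (hm : 1 ≤ m) :
    ∑ i ∈ Finset.range (m+1), (i:ℝ)^2 * (ℙ {ω | ξ ω = i}).toReal
      = (m : ℝ) ^ ((2 : ℝ) - α) * L₁ m := by
  rw [← htrunc m hm]
  set f : ℕ → ℝ := fun i => if i ≤ m then (i:ℝ)^2 else 0 with hfdef
  have hfB : ∀ i, |f i| ≤ (m:ℝ)^2 := by
    intro i
    rw [hfdef]
    by_cases h : i ≤ m
    · simp only [if_pos h, abs_of_nonneg (by positivity : (0:ℝ) ≤ (i:ℝ)^2)]
      have : (i:ℝ) ≤ m := Nat.cast_le.mpr h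
      nlinarith [Nat.cast_nonneg (α := ℝ) i]
    · simp only [if_neg h, abs_zero]; positivity
  have hs : MeasurableSet {ω | ξ ω ≤ m} := hmeasξ (by trivial : MeasurableSet {i | i ≤ m})
  have h1 : ∫ ω in {ω | ξ ω ≤ m}, ((ξ ω : ℝ)) ^ 2 = ∫ ω, f (ξ ω) := by
    rw [← integral_indicator hs]
    congr 1
    funext ω
    by_cases h : ξ ω ≤ m
    · simp [Set.indicator, hfdef, h]
    · simp [Set.indicator, hfdef, h]
  rw [h1, lemA ξ hmeasξ f _ hfB]
  rw [tsum_eq_sum (s := Finset.range (m+1)) (by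
    intro i hi
    have : ¬ i ≤ m := by simpa [Finset.mem_range, Nat.lt_succ_iff] using hi
    simp [hfdef, this])]
  apply Finset.sum_congr rfl
  intro i hi
  have : i ≤ m := Nat.lt_succ_iff.mp (Finset.mem_range.mp hi)
  simp [hfdef, this, mul_comm]

/-- With `ξ` critical, `E(ξ² 1_{ξ≤n}) = n^(2-α) L₁(n)`, `ξ̂` size-biased and `c > 0` fixed,
there is `C > 0` with `E(1 - (1 - c/n)^ξ̂) ≤ C n^(1-α) L₁(n)` for all sufficiently large `n`. -/
theorem stmt12 {Ω : Type*} [MeasureSpace Ω] [IsProbabilityMeasure (ℙ : Measure Ω)]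
    (α : ℝ) (hα1 : 1 < α) (hα2 : α ≤ 2)
    (L₁ : ℝ → ℝ) (hLpos : ∀ x > 0, 0 < L₁ x) (hL : SlowlyVarying L₁)
    (ξ ξhat : Ω → ℕ) (hmeasξ : Measurable ξ) (hmeasξhat : Measurable ξhat)
    (hmean : ∫ ω, (ξ ω : ℝ) = 1)
    (htrunc : ∀ n : ℕ, 1 ≤ n →
      ∫ ω in {ω | ξ ω ≤ n}, ((ξ ω : ℝ)) ^ 2 = (n : ℝ) ^ ((2 : ℝ) - α) * L₁ n)
    (hbias : ∀ i : ℕ, (ℙ {ω | ξhat ω = i}).toReal = i * (ℙ {ω | ξ ω = i}).toReal)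
    (c : ℝ) (hc : 0 < c) :
    ∃ C : ℝ, 0 < C ∧ ∃ N : ℕ, ∀ n : ℕ, N ≤ n →
      ∫ ω, (1 - (1 - c / (n : ℝ)) ^ (ξhat ω)) ≤ C * (n : ℝ) ^ ((1 : ℝ) - α) * L₁ n := by
  -- constants
  set ρ : ℝ := (1 + (2:ℝ) ^ ((1:ℝ) - α)) / 2 with hρdef
  have hpow1 : (2:ℝ) ^ ((1:ℝ) - α) < 1 :=
    Real.rpow_lt_one_of_one_lt_of_neg one_lt_two (by linarith)
  have hpowpos : (0:ℝ) < (2:ℝ) ^ ((1:ℝ) - α) := Real.rpow_pos_of_pos two_pos _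
  have hρpos : 0 < ρ := by rw [hρdef]; linarith
  have hρlt : ρ < 1 := by rw [hρdef]; linarith
  set K : ℝ := ρ * (2:ℝ) ^ (α - 1) with hKdef
  have hid : (2:ℝ) ^ (α-1) * (2:ℝ) ^ ((1:ℝ)-α) = 1 := by
    rw [← Real.rpow_add two_pos]; norm_num
  have hpow2 : (0:ℝ) < (2:ℝ) ^ (α - 1) := Real.rpow_pos_of_pos two_pos _
  have hKρ : K * (2:ℝ) ^ ((1:ℝ) - α) = ρ := by
    rw [hKdef, mul_assoc, hid, mul_one]
  have hK1 : 1 < K := by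
    have h1 : 1 < (2:ℝ) ^ (α - 1) := by
      rw [show (1:ℝ) = (2:ℝ) ^ (0:ℝ) by simp]
      exact Real.rpow_lt_rpow_left_iff one_lt_two |>.mpr (by linarith)
    nlinarith [hKρ]
  have hKpos : 0 < K := lt_trans one_pos hK1
  -- slow variation at 2
  have h2L := hL 2 two_pos
  have hev : ∀ᶠ x in atTop, L₁ (2 * x) / L₁ x < K := h2L.eventually_lt_const hK1
  obtain ⟨X₁, hX₁⟩ := eventually_atTop.mp hev
  set X₀ : ℝ := max X₁ 1 with hX₀def
  have hX₀1 : 1 ≤ X₀ := le_max_right _ _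
  have hX₀ : ∀ x, X₀ ≤ x → L₁ (2 * x) ≤ K * L₁ x := by
    intro x hx
    have hxpos : 0 < x := lt_of_lt_of_le one_pos (le_trans hX₀1 hx)
    have hLx : 0 < L₁ x := hLpos x hxpos
    have := hX₁ x (le_trans (le_max_left _ _) hx)
    exact le_of_lt ((div_lt_iff₀ hLx).mp this)
  -- the constant and threshold
  have h1ρ : 0 < 1 - ρ := by linarith
  refine ⟨c + 2 * ρ / (1 - ρ), by positivity, max (⌈X₀⌉₊ + 1) (⌈c⌉₊ + 1), ?_⟩
  intro n hn
  have hn1 : 1 ≤ n := le_trans (by omega : 1 ≤ max (⌈X₀⌉₊ + 1) (⌈c⌉₊ + 1)) hn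
  have hnpos : (0:ℝ) < (n:ℝ) := by exact_mod_cast hn1
  have hnX : X₀ ≤ (n:ℝ) := by
    have h2 : ⌈X₀⌉₊ ≤ n := by omega
    have h1 : (⌈X₀⌉₊ : ℝ) ≤ n := by exact_mod_cast h2
    exact le_trans (Nat.le_ceil X₀) h1
  have hcn : c ≤ (n:ℝ) := by
    have h2 : ⌈c⌉₊ ≤ n := by omega
    have h1 : (⌈c⌉₊ : ℝ) ≤ n := by exact_mod_cast h2
    exact le_trans (Nat.le_ceil c) h1
  -- distributions
  have hqsum : HasSum (fun i => (ℙ {ω | ξhat ω = i}).toReal) 1 := lemB ξhat hmeasξhat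
  have hp : ∀ i, (0:ℝ) ≤ (ℙ {ω | ξ ω = i}).toReal := fun i => ENNReal.toReal_nonneg
  have hA : ∀ m : ℕ, 1 ≤ m → ∑ i ∈ Finset.range (m+1), (i:ℝ)^2 * (ℙ {ω | ξ ω = i}).toReal
      = (m : ℝ) ^ ((2 : ℝ) - α) * L₁ m := truncSum α L₁ ξ hmeasξ htrunc
  -- the two main bounds
  have hTail := tailBound α hα1 L₁ hLpos _ _ hp hqsum hbias hA ρ K X₀ hρpos hρlt hX₀1 hKρ hKpos
    hX₀ n hn1 hnX
  have hInt := intBound ξ ξhat hmeasξhat hbias hqsum c hc n hn1 hcn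
  -- combine
  have hAn := hA n hn1
  have hrn : (n:ℝ) ^ ((2:ℝ) - α) = (n:ℝ) ^ ((1:ℝ) - α) * n := by
    rw [show (2:ℝ) - α = (1-α) + 1 by ring, Real.rpow_add hnpos, Real.rpow_one]
  have hlast : (c/n) * ∑ i ∈ Finset.range (n+1), (i:ℝ)^2 * (ℙ {ω | ξ ω = i}).toReal
      = c * ((n:ℝ) ^ ((1:ℝ) - α) * L₁ n) := by
    rw [hAn, hrn]
    field_simp
  calc ∫ ω, (1 - (1 - c / (n : ℝ)) ^ (ξhat ω))
      ≤ (1 - ∑ i ∈ Finset.range (n+1), (ℙ {ω | ξhat ω = i}).toReal)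
        + (c/n) * ∑ i ∈ Finset.range (n+1), (i:ℝ)^2 * (ℙ {ω | ξ ω = i}).toReal := hInt
    _ ≤ (2 * ρ / (1 - ρ)) * (n : ℝ) ^ ((1 : ℝ) - α) * L₁ n
        + c * ((n:ℝ) ^ ((1:ℝ) - α) * L₁ n) := by rw [hlast]; linarith
    _ = (c + 2 * ρ / (1 - ρ)) * (n : ℝ) ^ ((1 : ℝ) - α) * L₁ n := by ring
end

section
/- Let ξ̂ be size-biased as above, and given ξ̂, let U be uniform on {1,...,ξ̂}; set Y = min{U, ξ̂ − U + 1}. Then E(1 − e^{−Y/n}) ≥ (1/(8n)) E(ξ² 1_{ξ≤n}) = (1/8) n^{1-α} L_1(n). -/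
open MeasureTheory ProbabilityTheory Filter Real

open Finset in
lemma stmt13_fsum_rec (k : ℕ) :
    ∑ j ∈ range (k+2), min (j+1) (k+2-j) = (∑ j ∈ range k, min (j+1) (k-j)) + (k+2) := by
  rw [Finset.sum_range_succ, Finset.sum_range_succ']
  have h1 : ∀ j ∈ range k, min (j+1+1) (k+2-(j+1)) = min (j+1) (k-j) + 1 := by
    intro j hj
    rw [Finset.mem_range] at hj
    have : k + 2 - (j+1) = (k - j) + 1 := by omega
    rw [this, Nat.succ_min_succ]
  rw [Finset.sum_congr rfl h1, Finset.sum_add_distrib]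
  simp
  omega

open Finset in
lemma stmt13_fsum_ge (k : ℕ) : k^2 ≤ 4 * ∑ j ∈ range k, min (j+1) (k-j) := by
  induction k using Nat.strong_induction_on with
  | _ k ih =>
    match k with
    | 0 => simp
    | 1 => simp
    | (m+2) =>
      have := ih m (by omega)
      rw [stmt13_fsum_rec]
      nlinarith [this]

open Finset in
lemma stmt13_sum_min_ge (k : ℕ) :
    (k:ℝ)^2/4 ≤ ∑ j ∈ Icc 1 k, ((min j (k - j + 1) : ℕ) : ℝ) := by
  have h : ∑ j ∈ Icc 1 k, min j (k - j + 1) = ∑ j ∈ range k, min (j+1) (k-j) := by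
    apply Finset.sum_nbij' (fun j => j - 1) (fun i => i + 1)
    · intro j hj; rw [Finset.mem_Icc] at hj; rw [Finset.mem_range]; omega
    · intro i hi; rw [Finset.mem_range] at hi; rw [Finset.mem_Icc]; omega
    · intro j hj; rw [Finset.mem_Icc] at hj; omega
    · intro i _; omega
    · intro j hj; rw [Finset.mem_Icc] at hj
      congr 2 <;> omega
  have h2 := stmt13_fsum_ge k
  rw [← h] at h2
  rw [← Nat.cast_sum]
  have : ((k:ℝ))^2 ≤ 4 * ((∑ j ∈ Icc 1 k, min j (k - j + 1) : ℕ) : ℝ) := by exact_mod_cast h2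
  linarith

open Finset in
lemma stmt13_int_decomp {Ω : Type*} [MeasureSpace Ω] [IsProbabilityMeasure (ℙ : Measure Ω)]
    (g : Ω → ℕ) (hg : Measurable g) (f : ℕ → ℝ) (n : ℕ) :
    ∫ ω in {ω | g ω ≤ n}, f (g ω) = ∑ k ∈ range (n+1), f k * (ℙ {ω | g ω = k}).toReal := by
  have hset : {ω | g ω ≤ n} = ⋃ k ∈ range (n+1), {ω | g ω = k} := by
    ext ω; simp [Nat.lt_succ_iff]
  have hmeas : ∀ k : ℕ, MeasurableSet {ω | g ω = k} := fun k => hg (measurableSet_singleton k)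
  rw [hset, MeasureTheory.integral_biUnion_finset _ (fun k _ => hmeas k)]
  · apply Finset.sum_congr rfl
    intro k _
    have : ∫ ω in {ω | g ω = k}, f (g ω) = ∫ _ω in {ω | g ω = k}, f k := by
      apply MeasureTheory.setIntegral_congr_fun (hmeas k)
      intro ω hω
      simp only [Set.mem_setOf_eq] at hω
      show f (g ω) = f k
      rw [hω]
    rw [this, MeasureTheory.setIntegral_const, smul_eq_mul, mul_comm, measureReal_def]
  · intro i _ j _ hij
    exact Set.disjoint_left.mpr (fun ω hi hj => hij (hi.symm.trans hj))
  · intro k _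
    apply MeasureTheory.IntegrableOn.congr_fun
      ((integrableOn_const_iff (C := f k)).2 (Or.inr (measure_lt_top _ _)))
      _ (hmeas k)
    intro ω hω
    simp only [Set.mem_setOf_eq] at hω
    show f k = f (g ω)
    rw [hω]

open Finset in
lemma stmt13_sum_Icc_one {M : Type*} [AddCommMonoid M] (g : ℕ → M) (n : ℕ) :
    ∑ j ∈ Icc 1 n, g j = ∑ j ∈ range n, g (j+1) := by
  apply Finset.sum_nbij' (fun j => j - 1) (fun i => i + 1)
  · intro j hj; rw [Finset.mem_Icc] at hj; rw [Finset.mem_range]; omega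
  · intro i hi; rw [Finset.mem_range] at hi; rw [Finset.mem_Icc]; omega
  · intro j hj; rw [Finset.mem_Icc] at hj; omega
  · intro i _; omega
  · intro j hj; rw [Finset.mem_Icc] at hj
    congr 1; omega

lemma stmt13_half_le_one_sub_exp {x : ℝ} (h0 : 0 ≤ x) (h1 : x ≤ 1) :
    x / 2 ≤ 1 - Real.exp (-x) := by
  rw [Real.exp_neg]
  have hE := Real.exp_pos x
  have h2 := Real.add_one_le_exp x
  have h3 : (Real.exp x)⁻¹ * Real.exp x = 1 := inv_mul_cancel₀ (ne_of_gt hE)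
  nlinarith [inv_pos.mpr hE]

open Finset in
/-- With `ξ` critical, `E(ξ² 1_{ξ≤n}) = n^(2-α) L₁(n)`, `ξ̂` size-biased, `U` uniform on
`{1,...,ξ̂}` given `ξ̂`, and `Y = min{U, ξ̂ - U + 1}`, one has
`E(1 - e^{-Y/n}) ≥ (1/(8n)) E(ξ² 1_{ξ≤n}) = (1/8) n^(1-α) L₁(n)`. -/
theorem stmt13 {Ω : Type*} [MeasureSpace Ω] [IsProbabilityMeasure (ℙ : Measure Ω)]
    (α : ℝ) (hα1 : 1 < α) (hα2 : α ≤ 2)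
    (L₁ : ℝ → ℝ) (hLpos : ∀ x > 0, 0 < L₁ x) (hL : SlowlyVarying L₁)
    (ξ ξhat U : Ω → ℕ) (hmeasξ : Measurable ξ) (hmeasξhat : Measurable ξhat)
    (hmeasU : Measurable U)
    (hmean : ∫ ω, (ξ ω : ℝ) = 1)
    (htrunc : ∀ n : ℕ, 1 ≤ n →
      ∫ ω in {ω | ξ ω ≤ n}, ((ξ ω : ℝ)) ^ 2 = (n : ℝ) ^ ((2 : ℝ) - α) * L₁ n)
    (hbias : ∀ i : ℕ, (ℙ {ω | ξhat ω = i}).toReal = i * (ℙ {ω | ξ ω = i}).toReal)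
    (hUrange : ∀ ω, 1 ≤ U ω ∧ U ω ≤ ξhat ω)
    (hUunif : ∀ k j : ℕ, 1 ≤ j → j ≤ k →
      (ℙ {ω | ξhat ω = k ∧ U ω = j}).toReal = (ℙ {ω | ξhat ω = k}).toReal / k) :
    ∀ n : ℕ, 1 ≤ n →
      (∫ ω, (1 - Real.exp (-(min (U ω) (ξhat ω - U ω + 1) : ℝ) / n))
          ≥ (1 / (8 * (n : ℝ))) * ∫ ω in {ω | ξ ω ≤ n}, ((ξ ω : ℝ)) ^ 2) ∧
      (∫ ω, (1 - Real.exp (-(min (U ω) (ξhat ω - U ω + 1) : ℝ) / n))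
          ≥ (1 / 8) * (n : ℝ) ^ ((1 : ℝ) - α) * L₁ n) := by
  intro n hn
  have hnR : (0:ℝ) < n := by exact_mod_cast hn
  set Y : Ω → ℕ := fun ω => min (U ω) (ξhat ω - U ω + 1) with hYdef
  set F : Ω → ℝ := fun ω => 1 - Real.exp (-(Y ω : ℝ) / n) with hFdef
  set c : ℕ → ℕ → ℝ := fun k j => ((min j (k - j + 1) : ℕ) : ℝ) / (2*n) with hcdef
  set S : Finset (ℕ × ℕ) := Finset.range (n+1) ×ˢ Finset.range (n+1) with hSdef
  set A : ℕ × ℕ → Set Ω := fun p => {ω | ξhat ω = p.1 ∧ U ω = p.2} with hAdef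
  have hmeasA : ∀ p : ℕ × ℕ, MeasurableSet (A p) := by
    intro p
    exact (hmeasξhat (measurableSet_singleton p.1)).inter (hmeasU (measurableSet_singleton p.2))
  set G : Ω → ℝ := fun ω => ∑ p ∈ S, Set.indicator (A p) (fun _ => c p.1 p.2) ω with hGdef
  have hSmem : ∀ a b : ℕ, ((a, b) ∈ S ↔ (a < n+1 ∧ b < n+1)) := by
    intro a b
    rw [hSdef, Finset.mem_product]
    simp [Finset.mem_range]
  -- integrability
  have hIind : ∀ p : ℕ × ℕ, Integrable (Set.indicator (A p) (fun _ => c p.1 p.2)) ℙ := by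
    intro p
    rw [integrable_indicator_iff (hmeasA p)]
    exact (integrableOn_const_iff).2 (Or.inr (measure_lt_top _ _))
  have hGint : Integrable G ℙ := by
    apply integrable_finset_sum
    intro p _
    exact hIind p
  have hYm : Measurable Y := hmeasU.min ((hmeasξhat.sub hmeasU).add measurable_const)
  have hFm : Measurable F := by
    apply measurable_const.sub
    exact Real.measurable_exp.comp (((measurable_from_top.comp hYm).neg).div_const _)
  have hFint : Integrable F ℙ := by
    apply (integrable_const (1:ℝ)).mono' hFm.aestronglyMeasurable
    filter_upwards with ω
    have hexp : Real.exp (-(Y ω : ℝ) / n) ≤ 1 := by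
      rw [Real.exp_le_one_iff]
      apply div_nonpos_of_nonpos_of_nonneg
      · simp [neg_nonpos]
      · exact le_of_lt hnR
    have hpos : 0 < Real.exp (-(Y ω : ℝ) / n) := Real.exp_pos _
    simp only [hFdef, Real.norm_eq_abs]
    rw [abs_le]
    constructor <;> nlinarith
  -- pointwise bound G ≤ F
  have hpt : ∀ ω, G ω ≤ F ω := by
    intro ω
    obtain ⟨hU1, hU2⟩ := hUrange ω
    have hGval : G ω = if (ξhat ω, U ω) ∈ S then c (ξhat ω) (U ω) else 0 := by
      show (∑ p ∈ S, Set.indicator (A p) (fun _ => c p.1 p.2) ω)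
          = if (ξhat ω, U ω) ∈ S then c (ξhat ω) (U ω) else 0
      rw [show (∑ p ∈ S, Set.indicator (A p) (fun _ => c p.1 p.2) ω)
          = ∑ p ∈ S, if p = (ξhat ω, U ω) then c p.1 p.2 else 0 from ?_]
      · rw [Finset.sum_ite_eq' S (ξhat ω, U ω) (fun p => c p.1 p.2)]
      · apply Finset.sum_congr rfl
        intro p _
        rw [Set.indicator_apply]
        congr 1
        simp only [hAdef, Set.mem_setOf_eq, Prod.ext_iff]
        exact propext ⟨fun h => ⟨h.1.symm, h.2.symm⟩, fun h => ⟨h.1.symm, h.2.symm⟩⟩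
    by_cases hk : ξhat ω ≤ n
    · have hmem : (ξhat ω, U ω) ∈ S := by
        rw [hSmem]
        omega
      rw [hGval, if_pos hmem]
      have hYle : Y ω ≤ n := by
        have : Y ω ≤ U ω := min_le_left _ _
        omega
      have h0 : (0:ℝ) ≤ (Y ω : ℝ) / n := by positivity
      have h1 : (Y ω : ℝ) / n ≤ 1 := by
        rw [div_le_one hnR]
        exact_mod_cast hYle
      have hkey := stmt13_half_le_one_sub_exp h0 h1
      simp only [hFdef, hcdef]
      calc ((min (U ω) (ξhat ω - U ω + 1) : ℕ) : ℝ) / (2*n)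
          = ((Y ω : ℝ) / n) / 2 := by rw [hYdef]; ring
        _ ≤ 1 - Real.exp (-((Y ω : ℝ) / n)) := hkey
        _ = 1 - Real.exp (-(Y ω : ℝ) / n) := by rw [neg_div]
    · have hmem : (ξhat ω, U ω) ∉ S := by
        rw [hSmem]
        omega
      rw [hGval, if_neg hmem]
      have hexp : Real.exp (-(Y ω : ℝ) / n) ≤ 1 := by
        rw [Real.exp_le_one_iff]
        apply div_nonpos_of_nonpos_of_nonneg
        · simp [neg_nonpos]
        · exact le_of_lt hnR
      simp only [hFdef]
      linarith
  -- integral of G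
  have hGeq : ∫ ω, G ω = ∑ p ∈ S, (ℙ (A p)).toReal * c p.1 p.2 := by
    rw [hGdef, integral_finset_sum S (fun p _ => hIind p)]
    apply Finset.sum_congr rfl
    intro p _
    rw [integral_indicator_const _ (hmeasA p), smul_eq_mul, measureReal_def]
  have hAP : ∀ p : ℕ × ℕ, ℙ (A p) = ℙ {ω | ξhat ω = p.1 ∧ U ω = p.2} := fun p => rfl
  have hterm_nonneg : ∀ p : ℕ × ℕ, 0 ≤ (ℙ (A p)).toReal * c p.1 p.2 := by
    intro p
    apply mul_nonneg ENNReal.toReal_nonneg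
    rw [hcdef]
    positivity
  have hsum1 : ∑ p ∈ S, (ℙ (A p)).toReal * c p.1 p.2
      ≥ ∑ k ∈ Icc 1 n, ∑ j ∈ Icc 1 k, (ℙ (A (k, j))).toReal * c k j := by
    rw [hSdef, Finset.sum_product]
    have hsub1 : Icc 1 n ⊆ range (n+1) := by
      intro k hk; rw [Finset.mem_Icc] at hk; rw [Finset.mem_range]; omega
    apply le_trans (Finset.sum_le_sum_of_subset_of_nonneg hsub1
        (fun k _ _ => Finset.sum_nonneg (fun j _ => hterm_nonneg (k, j))))
    apply Finset.sum_le_sum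
    intro k hk
    rw [Finset.mem_range] at hk
    have hsub2 : Icc 1 k ⊆ range (n+1) := by
      intro j hj; rw [Finset.mem_Icc] at hj; rw [Finset.mem_range]; omega
    exact Finset.sum_le_sum_of_subset_of_nonneg hsub2 (fun j _ _ => hterm_nonneg (k, j))
  have hsum2 : ∀ k ∈ Icc 1 n, ∑ j ∈ Icc 1 k, (ℙ (A (k, j))).toReal * c k j
      ≥ (1 / (8 * (n:ℝ))) * (k * (ℙ {ω | ξhat ω = k}).toReal) := by
    intro k hk
    rw [Finset.mem_Icc] at hk
    have hkR : (0:ℝ) < k := by exact_mod_cast hk.1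
    have heq : ∀ j ∈ Icc 1 k, (ℙ (A (k, j))).toReal * c k j
        = ((ℙ {ω | ξhat ω = k}).toReal / (k * (2*n))) * ((min j (k - j + 1) : ℕ) : ℝ) := by
      intro j hj
      rw [Finset.mem_Icc] at hj
      rw [hAP, hUunif k j hj.1 hj.2, hcdef]
      field_simp
      try ring
    rw [Finset.sum_congr rfl heq, ← Finset.mul_sum]
    have hmin := stmt13_sum_min_ge k
    have hfac : 0 ≤ (ℙ {ω | ξhat ω = k}).toReal / (k * (2*n)) := by positivity
    calc (ℙ {ω | ξhat ω = k}).toReal / (k * (2*n)) * ∑ j ∈ Icc 1 k, ((min j (k - j + 1) : ℕ) : ℝ)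
        ≥ (ℙ {ω | ξhat ω = k}).toReal / (k * (2*n)) * ((k:ℝ)^2/4) :=
          mul_le_mul_of_nonneg_left hmin hfac
      _ = (1 / (8 * (n:ℝ))) * (k * (ℙ {ω | ξhat ω = k}).toReal) := by
          field_simp
          ring
  have hsum3 : ∑ k ∈ Icc 1 n, (1 / (8 * (n:ℝ))) * (k * (ℙ {ω | ξhat ω = k}).toReal)
      = (1 / (8 * (n:ℝ))) * ∫ ω in {ω | ξ ω ≤ n}, ((ξ ω : ℝ)) ^ 2 := by
    have hdec : ∫ ω in {ω | ξ ω ≤ n}, ((ξ ω : ℝ)) ^ 2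
        = ∑ k ∈ range (n+1), ((k:ℝ))^2 * (ℙ {ω | ξ ω = k}).toReal :=
      stmt13_int_decomp ξ hmeasξ (fun k => ((k:ℝ))^2) n
    rw [hdec, ← Finset.mul_sum]
    congr 1
    have hbb : ∀ k : ℕ,
        (k:ℝ) * (ℙ {ω | ξhat ω = k}).toReal = ((k:ℝ))^2 * (ℙ {ω | ξ ω = k}).toReal := by
      intro k
      rw [hbias k]
      ring
    rw [Finset.sum_congr rfl (fun k _ => hbb k)]
    rw [stmt13_sum_Icc_one (fun k => ((k:ℝ))^2 * (ℙ {ω | ξ ω = k}).toReal) n]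
    rw [Finset.sum_range_succ' (fun k => ((k:ℝ))^2 * (ℙ {ω | ξ ω = k}).toReal) n]
    simp
  have hmain : ∫ ω, F ω ≥ (1 / (8 * (n:ℝ))) * ∫ ω in {ω | ξ ω ≤ n}, ((ξ ω : ℝ)) ^ 2 := by
    calc ∫ ω, F ω ≥ ∫ ω, G ω := integral_mono hGint hFint hpt
      _ = ∑ p ∈ S, (ℙ (A p)).toReal * c p.1 p.2 := hGeq
      _ ≥ ∑ k ∈ Icc 1 n, ∑ j ∈ Icc 1 k, (ℙ (A (k, j))).toReal * c k j := hsum1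
      _ ≥ ∑ k ∈ Icc 1 n, (1 / (8 * (n:ℝ))) * (k * (ℙ {ω | ξhat ω = k}).toReal) :=
          Finset.sum_le_sum hsum2
      _ = (1 / (8 * (n:ℝ))) * ∫ ω in {ω | ξ ω ≤ n}, ((ξ ω : ℝ)) ^ 2 := hsum3
  have hFe : (∫ ω, (1 - Real.exp (-(min (U ω) (ξhat ω - U ω + 1) : ℝ) / n))) = ∫ ω, F ω := by
    apply integral_congr_ae
    filter_upwards with ω
    obtain ⟨hU1, hU2⟩ := hUrange ω
    have hcast : (min ((U ω : ℝ)) ((ξhat ω : ℝ) - (U ω : ℝ) + 1)) = ((Y ω : ℕ) : ℝ) := by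
      rw [hYdef]
      rw [Nat.cast_min, Nat.cast_add, Nat.cast_sub hU2, Nat.cast_one]
    rw [hFdef]
    push_cast
    rw [← hcast]
  constructor
  · rw [hFe]; exact hmain
  · rw [hFe]
    have h2 : (n:ℝ) ^ ((2:ℝ) - α) = n * (n:ℝ) ^ ((1:ℝ) - α) := by
      rw [show (2:ℝ) - α = 1 + (1-α) by ring, Real.rpow_add hnR, Real.rpow_one]
    have ht := htrunc n hn
    calc ∫ ω, F ω ≥ (1 / (8 * (n:ℝ))) * ∫ ω in {ω | ξ ω ≤ n}, ((ξ ω : ℝ)) ^ 2 := hmain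
      _ = (1 / (8 * (n:ℝ))) * ((n:ℝ) ^ ((2:ℝ) - α) * L₁ n) := by rw [ht]
      _ = (1 / 8) * (n : ℝ) ^ ((1 : ℝ) - α) * L₁ n := by
          rw [h2]; field_simp
end

section
/- Let ε_1, ε_2, ... be i.i.d. Bernoulli(p) random variables and let K be a random variable (on the same space) such that {Y_1 + ... + Y_k ≥ n} ⊆ {K ≤ k} for all k, where Y_i ≥ 1 and ε_i = 1_{Y_i > 1}. If R ≥ n − K, then for all 0 ≤ r ≤ ⌊n/2⌋, P(R ≥ r) ≥ P(Bin(⌊n/2⌋, p) ≥ r). -/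
open MeasureTheory ProbabilityTheory Filter Real

/-- Let `Y_i ≥ 1` be i.i.d., `p = P(Y_1 > 1)`, `K` satisfy `{Y_1+...+Y_k ≥ n} ⊆ {K ≤ k}`,
and `R ≥ n - K`.  Then for all `0 ≤ r ≤ ⌊n/2⌋`,
`P(R ≥ r) ≥ P(Bin(⌊n/2⌋, p) ≥ r)`. -/
theorem stmt18 {Ω : Type*} [MeasureSpace Ω] [IsProbabilityMeasure (ℙ : Measure Ω)]
    (Y : ℕ → Ω → ℕ) (hmeas : ∀ i, Measurable (Y i))
    (hindep : iIndepFun Y ℙ)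
    (hident : ∀ i, Measure.map (Y i) ℙ = Measure.map (Y 0) ℙ)
    (hY1 : ∀ i ω, 1 ≤ Y i ω)
    (n : ℕ) (K R : Ω → ℕ) (hKmeas : Measurable K) (hRmeas : Measurable R)
    (hK : ∀ k : ℕ, ∀ ω, n ≤ ∑ i ∈ Finset.range k, Y i ω → K ω ≤ k)
    (hR : ∀ ω, n - K ω ≤ R ω)
    (p : ℝ) (hp : p = (ℙ {ω | 1 < Y 0 ω}).toReal) :
    ∀ r : ℕ, r ≤ n / 2 →
      (ℙ {ω | r ≤ R ω}).toReal ≥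
        ∑ k ∈ Finset.Icc r (n / 2),
          ((n / 2).choose k : ℝ) * p ^ k * (1 - p) ^ (n / 2 - k) := by
  intro r hr
  set m := n / 2 with hm
  -- the Bernoulli sets
  set B : Finset ℕ → ℕ → Set ℕ := fun A i => if i ∈ A then {x | 1 < x} else {x | 1 < x}ᶜ
    with hB
  have hBmeas : ∀ A i, MeasurableSet (B A i) := by
    intro A i
    simp only [hB]
    split <;> exact trivial
  set T : Finset ℕ → Set Ω := fun A => ⋂ i ∈ Finset.range m, Y i ⁻¹' (B A i) with hT
  have hTmem : ∀ A ω, ω ∈ T A ↔ ∀ i ∈ Finset.range m, (1 < Y i ω ↔ i ∈ A) := by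
    intro A ω
    simp only [hT, Set.mem_iInter, Set.mem_preimage, hB]
    refine forall₂_congr fun i hi => ?_
    by_cases h : i ∈ A <;> simp [h]
  have hTmeas : ∀ A, MeasurableSet (T A) :=
    fun A => MeasurableSet.biInter (Finset.range m).countable_toSet
      fun i _ => (hmeas i) (hBmeas A i)
  -- same law
  have hYpre : ∀ i (s : Set ℕ), ℙ (Y i ⁻¹' s) = ℙ (Y 0 ⁻¹' s) := by
    intro i s
    have hs : MeasurableSet s := trivial
    rw [← Measure.map_apply (hmeas i) hs, hident i, Measure.map_apply (hmeas 0) hs]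
  set pE : ENNReal := ℙ (Y 0 ⁻¹' {x | 1 < x}) with hpE
  set qE : ENNReal := ℙ (Y 0 ⁻¹' {x | 1 < x}ᶜ) with hqE
  have hq1 : qE = 1 - pE := by
    rw [hqE, Set.preimage_compl, measure_compl ((hmeas 0) trivial) (measure_ne_top _ _),
      measure_univ, hpE]
  have hple : pE ≤ 1 := prob_le_one
  have hpreal : pE.toReal = p := by rw [hp]; rfl
  have hqreal : qE.toReal = 1 - p := by
    rw [hq1, ENNReal.toReal_sub_of_le hple (by simp), ENNReal.toReal_one, hpreal]
  -- measure of T A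
  have hTmeasure : ∀ A : Finset ℕ, A ⊆ Finset.range m →
      ℙ (T A) = pE ^ A.card * qE ^ (m - A.card) := by
    intro A hA
    have := hindep.measure_inter_preimage_eq_mul (Finset.range m)
      (sets := B A) (fun i _ => hBmeas A i)
    rw [hT]
    rw [this]
    have heach : ∀ i ∈ Finset.range m, ℙ (Y i ⁻¹' B A i) = if i ∈ A then pE else qE := by
      intro i _
      rw [hYpre i]
      by_cases h : i ∈ A <;> simp [hB, h, hpE, hqE]
    rw [Finset.prod_congr rfl heach, Finset.prod_ite, Finset.prod_const, Finset.prod_const]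
    congr 1
    · congr 1
      rw [Finset.filter_mem_eq_inter, Finset.inter_eq_right.mpr hA]
    · congr 1
      rw [← Finset.sdiff_eq_filter, Finset.card_sdiff_of_subset hA, Finset.card_range]
  -- the family of sets
  set 𝒜 : Finset (Finset ℕ) :=
    (Finset.Icc r m).biUnion (fun k => Finset.powersetCard k (Finset.range m)) with h𝒜
  have h𝒜mem : ∀ A ∈ 𝒜, A ⊆ Finset.range m ∧ r ≤ A.card ∧ A.card ≤ m := by
    intro A hA
    simp only [h𝒜, Finset.mem_biUnion, Finset.mem_Icc, Finset.mem_powersetCard] at hA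
    obtain ⟨k, ⟨hk1, hk2⟩, hsub, hcard⟩ := hA
    exact ⟨hsub, by omega, by omega⟩
  -- pointwise: on T A with r ≤ card A, R ≥ r
  have hpoint : ∀ A ∈ 𝒜, T A ⊆ {ω | r ≤ R ω} := by
    intro A hA ω hω
    obtain ⟨hsub, hrcard, hcardm⟩ := h𝒜mem A hA
    rw [hTmem] at hω
    have hrn : r ≤ n := by omega
    have hmn : m ≤ n - r := by omega
    -- sum of indicators over range m equals card A
    have hsum1 : ∑ i ∈ Finset.range m, (if 1 < Y i ω then 1 else 0) = A.card := by
      rw [Finset.sum_congr rfl (fun i hi => by rw [if_congr (hω i hi) rfl rfl]),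
        Finset.sum_ite_mem, Finset.inter_eq_right.mpr hsub, Finset.card_eq_sum_ones]
    have hsum2 : n ≤ ∑ i ∈ Finset.range (n - r), Y i ω := by
      have h1 : ∀ i, 1 + (if 1 < Y i ω then 1 else 0) ≤ Y i ω := by
        intro i
        have := hY1 i ω
        split <;> omega
      calc n = (n - r) + r := by omega
        _ ≤ (n - r) + ∑ i ∈ Finset.range m, (if 1 < Y i ω then 1 else 0) := by
            rw [hsum1]; omega
        _ ≤ (n - r) + ∑ i ∈ Finset.range (n - r), (if 1 < Y i ω then 1 else 0) := by
            exact Nat.add_le_add_left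
              (Finset.sum_le_sum_of_subset (Finset.range_subset_range.mpr hmn)) _
        _ = ∑ i ∈ Finset.range (n - r), (1 + (if 1 < Y i ω then 1 else 0)) := by
            rw [Finset.sum_add_distrib, Finset.sum_const, Finset.card_range, smul_eq_mul,
              mul_one]
        _ ≤ ∑ i ∈ Finset.range (n - r), Y i ω := Finset.sum_le_sum fun i _ => h1 i
    have hKle := hK (n - r) ω hsum2
    have := hR ω
    simp only [Set.mem_setOf_eq]
    omega
  -- pairwise disjointness
  have hdisj : (↑𝒜 : Set (Finset ℕ)).PairwiseDisjoint T := by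
    intro A hA A' hA' hne
    rw [Function.onFun, Set.disjoint_left]
    intro ω hω hω'
    apply hne
    rw [hTmem] at hω
    rw [hTmem] at hω'
    apply Finset.ext
    intro i
    by_cases hi : i ∈ Finset.range m
    · rw [← hω i hi, hω' i hi]
    · constructor
      · intro h; exact absurd ((h𝒜mem A hA).1 h) hi
      · intro h; exact absurd ((h𝒜mem A' hA').1 h) hi
  -- main estimate
  have hmain : ∑ A ∈ 𝒜, ℙ (T A) ≤ ℙ {ω | r ≤ R ω} := by
    rw [← measure_biUnion_finset hdisj (fun A _ => hTmeas A)]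
    apply measure_mono
    exact Set.iUnion₂_subset hpoint
  -- pass to reals
  have hfin : ∀ A ∈ 𝒜, ℙ (T A) ≠ ⊤ := fun A _ => measure_ne_top _ _
  have hmainR : ∑ A ∈ 𝒜, (ℙ (T A)).toReal ≤ (ℙ {ω | r ≤ R ω}).toReal := by
    rw [← ENNReal.toReal_sum hfin]
    exact ENNReal.toReal_mono (measure_ne_top _ _) hmain
  refine le_trans (le_of_eq ?_) hmainR
  -- compute the sum
  rw [h𝒜, Finset.sum_biUnion]
  · apply Finset.sum_congr rfl
    intro k hk
    rw [Finset.mem_Icc] at hk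
    have hterm : ∀ A ∈ Finset.powersetCard k (Finset.range m),
        (ℙ (T A)).toReal = p ^ k * (1 - p) ^ (m - k) := by
      intro A hA
      rw [Finset.mem_powersetCard] at hA
      rw [hTmeasure A hA.1, hA.2, ENNReal.toReal_mul, ENNReal.toReal_pow, ENNReal.toReal_pow,
        hpreal, hqreal]
    rw [Finset.sum_congr rfl hterm, Finset.sum_const, Finset.card_powersetCard,
      Finset.card_range, nsmul_eq_mul, mul_assoc]
  · -- disjointness of powersetCard families
    intro k hk k' hk' hne
    simp only [Finset.disjoint_left]
    intro A hA hA'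
    rw [Finset.mem_powersetCard] at hA hA'
    exact hne (by rw [← hA.2, hA'.2])
end

section
/- Let D_n be a positive-integer-valued random variable and suppose there exist a > 0, ε > 0 with α − 1 − ε > 0 such that P(D_n ≤ i) ≤ a((i/n)^{α−1−ε} ∧ 1) + 1_{⌊n/2⌋ ≤ i} for all i ≥ 1. Then for any 0 < q < α − 1 − ε there is a constant c' > 0, independent of n, such that E(D_n^{−q}) ≤ c' n^{−q}. -/
open MeasureTheory ProbabilityTheory Filter Real

section helpers

/-- Bernoulli consequence: `i^(-q) - (i+1)^(-q) ≤ q i^(-q-1)` for `0 < q ≤ 1`. -/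
private lemma diff_rpow_le' {q : ℝ} (hq : 0 < q) (hq1 : q ≤ 1) {i : ℕ} (hi : 1 ≤ i) :
    (i : ℝ) ^ (-q) - ((i : ℝ) + 1) ^ (-q) ≤ q * (i : ℝ) ^ (-q - 1) := by
  have hi0 : (0:ℝ) < i := by exact_mod_cast hi
  have hi1 : (1:ℝ) ≤ (i:ℝ) := by exact_mod_cast hi
  set A := (i:ℝ) ^ q with hA
  set B := ((i:ℝ) + 1) ^ q with hB
  have hApos : 0 < A := rpow_pos_of_pos hi0 q
  have hBpos : 0 < B := rpow_pos_of_pos (by linarith) q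
  have hAB : A ≤ B := rpow_le_rpow hi0.le (by linarith) hq.le
  set d := (i:ℝ) ^ (-q - 1) with hd
  have hdpos : 0 < d := rpow_pos_of_pos hi0 _
  have hCd : (i:ℝ) ^ (q - 1) = d * A * A := by
    rw [hd, hA, ← Real.rpow_add hi0, ← Real.rpow_add hi0]
    ring_nf
  have hbern : (1 + 1/(i:ℝ)) ^ q ≤ 1 + q * (1/(i:ℝ)) := by
    apply rpow_one_add_le_one_add_mul_self _ hq.le hq1
    have h : (0:ℝ) ≤ 1/(i:ℝ) := by positivity
    linarith
  have hkey : B ≤ A + q * (d * A * A) := by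
    have h1 : ((i:ℝ) + 1) = (i:ℝ) * (1 + 1/(i:ℝ)) := by field_simp
    have h2 : B = A * (1 + 1/(i:ℝ)) ^ q := by
      rw [hB, hA, h1, Real.mul_rpow hi0.le (by positivity)]
    have h3 : A * (1 + 1/(i:ℝ)) ^ q ≤ A * (1 + q * (1/(i:ℝ))) :=
      mul_le_mul_of_nonneg_left hbern hApos.le
    have h5 : A / (i:ℝ) = (i:ℝ) ^ (q - 1) := by
      rw [hA, Real.rpow_sub hi0, Real.rpow_one]
    have h4 : A * (1 + q * (1/(i:ℝ))) = A + q * (A / (i:ℝ)) := by ring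
    rw [h2]
    calc A * (1 + 1/(i:ℝ)) ^ q ≤ A * (1 + q * (1/(i:ℝ))) := h3
      _ = A + q * (A / (i:ℝ)) := h4
      _ = A + q * (d * A * A) := by rw [h5, hCd]
  have hLHS : (i : ℝ) ^ (-q) - ((i : ℝ) + 1) ^ (-q) = A⁻¹ - B⁻¹ := by
    rw [hA, hB, ← Real.rpow_neg hi0.le, ← Real.rpow_neg (by linarith)]
  rw [hLHS]
  have heq : A⁻¹ - B⁻¹ = (B - A) / (A * B) := by field_simp
  rw [heq, div_le_iff₀ (by positivity)]
  nlinarith [mul_le_mul_of_nonneg_left hAB (by positivity : (0:ℝ) ≤ q * d * A)]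

/-- `∑_{i=1}^N i^s ≤ N^(s+1)/(s+1)` for `-1 < s < 0`. -/
private lemma sum_rpow_le' {s : ℝ} (hs1 : -1 < s) (hs0 : s < 0) (N : ℕ) :
    ∑ i ∈ Finset.Icc 1 N, (i:ℝ) ^ s ≤ (N:ℝ) ^ (s+1) / (s+1) := by
  have hp : 0 < s + 1 := by linarith
  induction N with
  | zero =>
    rw [Finset.Icc_eq_empty (by norm_num)]
    simp [Real.zero_rpow hp.ne']
  | succ N ih =>
    rw [Finset.sum_Icc_succ_top (Nat.one_le_iff_ne_zero.2 (Nat.succ_ne_zero N))]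
    have hM : ((N+1:ℕ):ℝ) = (N:ℝ) + 1 := by push_cast; ring
    have hstep : (N:ℝ) ^ (s+1) + (s+1) * ((N:ℝ)+1) ^ s ≤ ((N:ℝ)+1) ^ (s+1) := by
      rcases Nat.eq_zero_or_pos N with h0 | hNpos
      · subst h0
        simp only [Nat.cast_zero, zero_add, Real.one_rpow, Real.zero_rpow hp.ne']
        linarith
      · have hN1 : (1:ℝ) ≤ (N:ℝ) := by exact_mod_cast hNpos
        have hM1 : (0:ℝ) < (N:ℝ) + 1 := by linarith
        have hbern : (1 + (-(1/((N:ℝ)+1)))) ^ (s+1) ≤ 1 + (s+1) * (-(1/((N:ℝ)+1))) := by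
          apply rpow_one_add_le_one_add_mul_self _ hp.le (by linarith)
          have h : 1/((N:ℝ)+1) ≤ 1 := by
            rw [div_le_one hM1]; linarith
          linarith
        have h1 : 1 + (-(1/((N:ℝ)+1))) = (N:ℝ)/((N:ℝ)+1) := by field_simp; ring
        rw [h1] at hbern
        have h2 : ((N:ℝ)/((N:ℝ)+1)) ^ (s+1) = (N:ℝ)^(s+1) / ((N:ℝ)+1)^(s+1) :=
          Real.div_rpow (Nat.cast_nonneg N) hM1.le _
        rw [h2] at hbern
        have h3 : (N:ℝ)^(s+1) ≤ (1 + (s+1) * (-(1/((N:ℝ)+1)))) * ((N:ℝ)+1)^(s+1) := by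
          have := mul_le_mul_of_nonneg_right hbern (Real.rpow_pos_of_pos hM1 (s+1)).le
          rwa [div_mul_cancel₀] at this
          exact (Real.rpow_pos_of_pos hM1 (s+1)).ne'
        have h4 : ((N:ℝ)+1)^(s+1) = ((N:ℝ)+1)^s * ((N:ℝ)+1) := by
          rw [Real.rpow_add hM1, Real.rpow_one]
        have h6 : (1 + (s+1) * (-(1/((N:ℝ)+1)))) * (((N:ℝ)+1)^(s+1))
            = ((N:ℝ)+1)^(s+1) - (s+1) * ((N:ℝ)+1)^s := by
          rw [h4]; field_simp; ring
        rw [h6] at h3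
        linarith
    calc (∑ i ∈ Finset.Icc 1 N, (i:ℝ) ^ s) + ((N+1:ℕ):ℝ) ^ s
        ≤ (N:ℝ) ^ (s+1)/(s+1) + ((N:ℝ)+1) ^ s := by rw [hM]; linarith [ih]
      _ ≤ ((N:ℝ)+1) ^ (s+1)/(s+1) := by
          rw [div_add' _ _ _ hp.ne', div_le_div_iff₀ hp hp]
          nlinarith [hstep]
      _ = ((N+1:ℕ):ℝ) ^ (s+1)/(s+1) := by rw [hM]

end helpers

/-- If `D_n ≥ 1` is integer valued and `P(D_n ≤ i) ≤ a((i/n)^(α-1-ε) ∧ 1) + 1_{⌊n/2⌋ ≤ i}`,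
then for `0 < q < α-1-ε` one has `E(D_n^{-q}) ≤ c' n^{-q}` with `c'` independent of `n`. -/
theorem stmt19 {Ω : Type*} [MeasureSpace Ω] [IsProbabilityMeasure (ℙ : Measure Ω)]
    (α a ε q : ℝ) (hα1 : 1 < α) (hα2 : α ≤ 2) (ha : 0 < a) (hε : 0 < ε)
    (hαε : 0 < α - 1 - ε) (hq : 0 < q) (hq' : q < α - 1 - ε)
    (D : ℕ → Ω → ℕ) (hmeas : ∀ n, Measurable (D n))
    (hpos : ∀ n ω, 1 ≤ D n ω)
    (hbound : ∀ n : ℕ, 1 ≤ n → ∀ i : ℕ, 1 ≤ i →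
      (ℙ {ω | D n ω ≤ i}).toReal ≤
        a * min (((i : ℝ) / n) ^ (α - 1 - ε)) 1 + (if n / 2 ≤ i then (1 : ℝ) else 0)) :
    ∃ c' : ℝ, 0 < c' ∧ ∀ n : ℕ, 1 ≤ n →
      ∫ ω, ((D n ω : ℝ)) ^ (-q) ≤ c' * (n : ℝ) ^ (-q) := by
  have hβ1 : α - 1 - ε ≤ 1 := by linarith
  have hq1 : q < 1 := lt_of_lt_of_le hq' hβ1
  set r : ℝ := (q + (α - 1 - ε))/2 with hrdef
  have hqr : q < r := by rw [hrdef]; linarith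
  have hrβ : r ≤ α - 1 - ε := by rw [hrdef]; linarith
  have hr1 : r ≤ 1 := le_trans hrβ hβ1
  have hrq : 0 < r - q := by linarith
  have hr0 : 0 < r := by rw [hrdef]; linarith
  refine ⟨2*q*a/(r-q) + 32*q + 1, by positivity, ?_⟩
  intro n hn
  have hn0 : (0:ℝ) < n := by exact_mod_cast hn
  set w : ℕ → ℝ := fun i => (i:ℝ)^(-q) - ((i:ℝ)+1)^(-q) with hw
  set S : ℕ → Set Ω := fun i => {ω | D n ω ≤ i} with hSdef
  have hS : ∀ i, MeasurableSet (S i) := by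
    intro i
    have h : S i = (D n) ⁻¹' (Set.Iic i) := rfl
    rw [h]; exact (hmeas n) (by trivial)
  -- pointwise bound
  have hpt : ∀ ω : Ω, ((D n ω : ℝ)) ^ (-q) ≤
      (∑ i ∈ Finset.Icc 1 (2*n), Set.indicator (S i) (fun _ => w i) ω)
        + ((2*n+1:ℕ):ℝ)^(-q) := by
    intro ω
    set d := D n ω with hdd
    have hd1 : 1 ≤ d := hpos n ω
    have hsum : (∑ i ∈ Finset.Icc 1 (2*n), Set.indicator (S i) (fun _ => w i) ω)
        = ∑ i ∈ Finset.Icc d (2*n), w i := by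
      have h1 : ∀ i, Set.indicator (S i) (fun _ => w i) ω
          = if d ≤ i then w i else 0 := by
        intro i
        simp [hSdef, Set.indicator_apply, Set.mem_setOf_eq, hdd]
      simp_rw [h1]
      rw [← Finset.sum_filter]
      congr 1
      ext j
      simp only [Finset.mem_filter, Finset.mem_Icc]
      omega
    rw [hsum]
    rcases le_or_gt d (2*n) with hdN | hdN
    · have htel : ∑ i ∈ Finset.Icc d (2*n), w i
          = (d:ℝ)^(-q) - ((2*n+1:ℕ):ℝ)^(-q) := by
        rw [← Finset.Ico_add_one_right_eq_Icc, Finset.sum_Ico_eq_sum_range]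
        have h2 : ∀ j ∈ Finset.range (2*n+1-d),
            w (d + j) = (fun k => ((d+k:ℕ):ℝ)^(-q)) j
              - (fun k => ((d+k:ℕ):ℝ)^(-q)) (j+1) := by
          intro j _
          simp only [hw]
          have h : (((d+j:ℕ)):ℝ) + 1 = ((d+(j+1):ℕ):ℝ) := by push_cast; ring
          rw [h]
        rw [Finset.sum_congr rfl h2, Finset.sum_range_sub']
        have h3 : d + (2*n+1-d) = 2*n+1 := by omega
        rw [Nat.add_zero, h3]
      rw [htel]
      linarith
    · have hemp : Finset.Icc d (2*n) = ∅ := Finset.Icc_eq_empty (by omega)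
      rw [hemp, Finset.sum_empty, zero_add]
      apply Real.rpow_le_rpow_of_nonpos (by positivity) ?_ (by linarith : -q ≤ 0)
      exact_mod_cast hdN
  -- integral identity
  have hInt : ∀ i, Integrable (Set.indicator (S i) (fun _ => w i)) ℙ :=
    fun i => (integrable_const (w i)).indicator (hS i)
  have hsumInt : Integrable (fun ω => ∑ i ∈ Finset.Icc 1 (2*n),
      Set.indicator (S i) (fun _ => w i) ω) ℙ :=
    integrable_finset_sum _ (fun i _ => hInt i)
  have hgInt : Integrable (fun ω => (∑ i ∈ Finset.Icc 1 (2*n),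
      Set.indicator (S i) (fun _ => w i) ω) + ((2*n+1:ℕ):ℝ)^(-q)) ℙ :=
    hsumInt.add (integrable_const _)
  have hEg : ∫ ω, ((∑ i ∈ Finset.Icc 1 (2*n), Set.indicator (S i) (fun _ => w i) ω)
        + ((2*n+1:ℕ):ℝ)^(-q))
      = (∑ i ∈ Finset.Icc 1 (2*n), (ℙ (S i)).toReal * w i) + ((2*n+1:ℕ):ℝ)^(-q) := by
    rw [integral_add hsumInt (integrable_const _), integral_finset_sum _ (fun i _ => hInt i),
      integral_const]
    simp only [integral_indicator_const _ (hS _), smul_eq_mul, measureReal_def, measure_univ,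
      ENNReal.toReal_one, one_mul]
  have hmono : ∫ ω, ((D n ω : ℝ)) ^ (-q)
      ≤ (∑ i ∈ Finset.Icc 1 (2*n), (ℙ (S i)).toReal * w i) + ((2*n+1:ℕ):ℝ)^(-q) := by
    rw [← hEg]
    exact integral_mono_of_nonneg
      (Eventually.of_forall fun ω => Real.rpow_nonneg (Nat.cast_nonneg _) _)
      hgInt (Eventually.of_forall hpt)
  refine le_trans hmono ?_
  -- term-by-term bound
  have hterm : ∀ i ∈ Finset.Icc 1 (2*n), (ℙ (S i)).toReal * w i ≤
      (q*a*(n:ℝ)^(-r) * (i:ℝ)^(r-q-1))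
        + (if n/2 ≤ i then q * ((n:ℝ)/4)^(-q-1) else 0) := by
    intro i hi
    have hi1 : 1 ≤ i := (Finset.mem_Icc.1 hi).1
    have hi0 : (0:ℝ) < i := by exact_mod_cast hi1
    have hiR : (1:ℝ) ≤ (i:ℝ) := by exact_mod_cast hi1
    have hP := hbound n hn i hi1
    have hw_le : w i ≤ q * (i:ℝ)^(-q-1) := diff_rpow_le' hq hq1.le hi1
    have hw0 : 0 ≤ w i := by
      have h : ((i:ℝ)+1)^(-q) ≤ (i:ℝ)^(-q) :=
        Real.rpow_le_rpow_of_nonpos hi0 (by linarith) (by linarith)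
      simp only [hw]; linarith
    have hmin0 : 0 ≤ min (((i:ℝ)/n) ^ (α - 1 - ε)) 1 :=
      le_min (Real.rpow_nonneg (by positivity) _) zero_le_one
    have hind0 : 0 ≤ (if n/2 ≤ i then (1:ℝ) else 0) := by positivity
    have hB0 : 0 ≤ a * min (((i:ℝ)/n) ^ (α - 1 - ε)) 1 + (if n/2 ≤ i then (1:ℝ) else 0) := by
      have := mul_nonneg ha.le hmin0; linarith
    have step1 : (ℙ (S i)).toReal * w i ≤
        (a * min (((i:ℝ)/n) ^ (α - 1 - ε)) 1 + (if n/2 ≤ i then (1:ℝ) else 0))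
          * (q * (i:ℝ)^(-q-1)) :=
      mul_le_mul hP hw_le hw0 hB0
    have hX0 : (0:ℝ) < q * (i:ℝ)^(-q-1) := by positivity
    have hmin : min (((i:ℝ)/n) ^ (α - 1 - ε)) 1 ≤ ((i:ℝ)/(n:ℝ))^r := by
      rcases le_or_gt (i:ℝ) (n:ℝ) with h | h
      · refine (min_le_left _ _).trans ?_
        exact Real.rpow_le_rpow_of_exponent_ge (by positivity)
          ((div_le_one hn0).2 h) hrβ
      · refine (min_le_right _ _).trans ?_
        exact Real.one_le_rpow ((one_le_div hn0).2 h.le) hr0.le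
    have hrw : ((i:ℝ)/(n:ℝ))^r * (i:ℝ)^(-q-1) = (n:ℝ)^(-r) * (i:ℝ)^(r-q-1) := by
      have h1 : (i:ℝ)^r * (i:ℝ)^(-q-1) = (i:ℝ)^(r-q-1) := by
        rw [← Real.rpow_add hi0]; congr 1; ring
      rw [Real.div_rpow hi0.le hn0.le, Real.rpow_neg hn0.le, ← h1]
      ring
    have hpart1 : a * min (((i:ℝ)/n) ^ (α - 1 - ε)) 1 * (q * (i:ℝ)^(-q-1))
        ≤ q*a*(n:ℝ)^(-r) * (i:ℝ)^(r-q-1) := by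
      calc a * min (((i:ℝ)/n) ^ (α - 1 - ε)) 1 * (q * (i:ℝ)^(-q-1))
          ≤ a * (((i:ℝ)/(n:ℝ))^r) * (q * (i:ℝ)^(-q-1)) :=
            mul_le_mul_of_nonneg_right (mul_le_mul_of_nonneg_left hmin ha.le) hX0.le
        _ = q * a * (((i:ℝ)/(n:ℝ))^r * (i:ℝ)^(-q-1)) := by ring
        _ = q * a * ((n:ℝ)^(-r) * (i:ℝ)^(r-q-1)) := by rw [hrw]
        _ = q*a*(n:ℝ)^(-r) * (i:ℝ)^(r-q-1) := by ring
    have hpart2 : (if n/2 ≤ i then (1:ℝ) else 0) * (q * (i:ℝ)^(-q-1))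
        ≤ (if n/2 ≤ i then q * ((n:ℝ)/4)^(-q-1) else 0) := by
      split_ifs with h
      · rw [one_mul]
        have h2 : n ≤ 2*i+1 := by omega
        have h2R : (n:ℝ) ≤ 2*(i:ℝ)+1 := by exact_mod_cast h2
        have hn4 : (n:ℝ)/4 ≤ (i:ℝ) := by linarith
        have h3 : (i:ℝ)^(-q-1) ≤ ((n:ℝ)/4)^(-q-1) :=
          Real.rpow_le_rpow_of_nonpos (by positivity) hn4 (by linarith)
        exact mul_le_mul_of_nonneg_left h3 hq.le
      · simp
    calc (ℙ (S i)).toReal * w i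
        ≤ (a * min (((i:ℝ)/n) ^ (α - 1 - ε)) 1 + (if n/2 ≤ i then (1:ℝ) else 0))
            * (q * (i:ℝ)^(-q-1)) := step1
      _ = a * min (((i:ℝ)/n) ^ (α - 1 - ε)) 1 * (q * (i:ℝ)^(-q-1))
            + (if n/2 ≤ i then (1:ℝ) else 0) * (q * (i:ℝ)^(-q-1)) := by ring
      _ ≤ (q*a*(n:ℝ)^(-r) * (i:ℝ)^(r-q-1))
            + (if n/2 ≤ i then q * ((n:ℝ)/4)^(-q-1) else 0) := add_le_add hpart1 hpart2
  -- sum bounds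
  have hT1 : ∑ i ∈ Finset.Icc 1 (2*n), q*a*(n:ℝ)^(-r) * (i:ℝ)^(r-q-1)
      ≤ 2*q*a/(r-q) * (n:ℝ)^(-q) := by
    rw [← Finset.mul_sum]
    have hs := sum_rpow_le' (s := r-q-1) (by linarith) (by linarith) (2*n)
    have he : (r-q-1)+1 = r-q := by ring
    rw [he] at hs
    have hc : ((2*n:ℕ):ℝ) = 2*(n:ℝ) := by push_cast; ring
    rw [hc] at hs
    have h2n : (2*(n:ℝ))^(r-q) = (2:ℝ)^(r-q) * (n:ℝ)^(r-q) :=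
      Real.mul_rpow (by norm_num) hn0.le
    have h2b : (2:ℝ)^(r-q) ≤ 2 := by
      have h := Real.rpow_le_rpow_of_exponent_le (by norm_num : (1:ℝ) ≤ 2)
        (by linarith : r-q ≤ 1)
      rwa [Real.rpow_one] at h
    have hnn : (n:ℝ)^(-r) * (n:ℝ)^(r-q) = (n:ℝ)^(-q) := by
      rw [← Real.rpow_add hn0]; congr 1; ring
    calc q*a*(n:ℝ)^(-r) * ∑ i ∈ Finset.Icc 1 (2*n), (i:ℝ)^(r-q-1)
        ≤ q*a*(n:ℝ)^(-r) * ((2*(n:ℝ))^(r-q)/(r-q)) := by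
          apply mul_le_mul_of_nonneg_left hs (by positivity)
      _ = (q*a/(r-q)) * (2:ℝ)^(r-q) * ((n:ℝ)^(-r) * (n:ℝ)^(r-q)) := by
          rw [h2n]; field_simp
      _ = (q*a/(r-q)) * (2:ℝ)^(r-q) * (n:ℝ)^(-q) := by rw [hnn]
      _ ≤ (q*a/(r-q)) * 2 * (n:ℝ)^(-q) := by
          apply mul_le_mul_of_nonneg_right
            (mul_le_mul_of_nonneg_left h2b (by positivity))
            (Real.rpow_nonneg hn0.le _)
      _ = 2*q*a/(r-q) * (n:ℝ)^(-q) := by ring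
  have hT2 : ∑ i ∈ Finset.Icc 1 (2*n), (if n/2 ≤ i then q * ((n:ℝ)/4)^(-q-1) else 0)
      ≤ 32*q * (n:ℝ)^(-q) := by
    have hle : ∀ i ∈ Finset.Icc 1 (2*n),
        (if n/2 ≤ i then q * ((n:ℝ)/4)^(-q-1) else 0) ≤ q * ((n:ℝ)/4)^(-q-1) := by
      intro i _
      split_ifs
      · exact le_refl _
      · positivity
    have h44 : ((n:ℝ)/4)^(-q-1) = (n:ℝ)^(-q-1) * (4:ℝ)^(q+1) := by
      have e1 : ((n:ℝ)/4) = (n:ℝ) * (4:ℝ)⁻¹ := by ring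
      rw [e1, Real.mul_rpow hn0.le (by norm_num),
        Real.inv_rpow (by norm_num : (0:ℝ) ≤ 4),
        show (-q-1:ℝ) = -(q+1) by ring,
        Real.rpow_neg (by norm_num : (0:ℝ) ≤ 4) (q+1), inv_inv]
    have h16 : (4:ℝ)^(q+1) ≤ 16 := by
      have h2 : (4:ℝ)^(q+1) ≤ (4:ℝ)^(2:ℝ) :=
        Real.rpow_le_rpow_of_exponent_le (by norm_num) (by linarith)
      have h3 : (4:ℝ)^(2:ℝ) = 16 := by
        rw [show (2:ℝ) = ((2:ℕ):ℝ) by norm_num, Real.rpow_natCast]; norm_num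
      linarith
    have hmul : (n:ℝ) * (n:ℝ)^(-q-1) = (n:ℝ)^(-q) := by
      have h : (n:ℝ)^(1:ℝ) * (n:ℝ)^(-q-1) = (n:ℝ)^(-q) := by
        rw [← Real.rpow_add hn0]; congr 1; ring
      rwa [Real.rpow_one] at h
    calc ∑ i ∈ Finset.Icc 1 (2*n), (if n/2 ≤ i then q * ((n:ℝ)/4)^(-q-1) else 0)
        ≤ ∑ i ∈ Finset.Icc 1 (2*n), q * ((n:ℝ)/4)^(-q-1) := Finset.sum_le_sum hle
      _ = ((2*n:ℕ):ℝ) * (q * ((n:ℝ)/4)^(-q-1)) := by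
          rw [Finset.sum_const, Nat.card_Icc, nsmul_eq_mul]
          norm_num
      _ = 2 * q * (4:ℝ)^(q+1) * ((n:ℝ) * (n:ℝ)^(-q-1)) := by
          rw [h44]; push_cast; ring
      _ = 2 * q * (4:ℝ)^(q+1) * (n:ℝ)^(-q) := by rw [hmul]
      _ ≤ 2 * q * 16 * (n:ℝ)^(-q) := by
          apply mul_le_mul_of_nonneg_right
            (mul_le_mul_of_nonneg_left h16 (by positivity))
            (Real.rpow_nonneg hn0.le _)
      _ = 32*q * (n:ℝ)^(-q) := by ring
  have hc0 : ((2*n+1:ℕ):ℝ)^(-q) ≤ (n:ℝ)^(-q) :=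
    Real.rpow_le_rpow_of_nonpos hn0 (by push_cast; linarith) (by linarith)
  calc (∑ i ∈ Finset.Icc 1 (2*n), (ℙ (S i)).toReal * w i) + ((2*n+1:ℕ):ℝ)^(-q)
      ≤ (∑ i ∈ Finset.Icc 1 (2*n), ((q*a*(n:ℝ)^(-r) * (i:ℝ)^(r-q-1))
          + (if n/2 ≤ i then q * ((n:ℝ)/4)^(-q-1) else 0))) + ((2*n+1:ℕ):ℝ)^(-q) :=
        add_le_add_left (Finset.sum_le_sum hterm) _
    _ = ((∑ i ∈ Finset.Icc 1 (2*n), q*a*(n:ℝ)^(-r) * (i:ℝ)^(r-q-1))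
          + ∑ i ∈ Finset.Icc 1 (2*n), (if n/2 ≤ i then q * ((n:ℝ)/4)^(-q-1) else 0))
          + ((2*n+1:ℕ):ℝ)^(-q) := by rw [Finset.sum_add_distrib]
    _ ≤ (2*q*a/(r-q) * (n:ℝ)^(-q) + 32*q * (n:ℝ)^(-q)) + (n:ℝ)^(-q) :=
        add_le_add (add_le_add hT1 hT2) hc0
    _ = (2*q*a/(r-q) + 32*q + 1) * (n:ℝ)^(-q) := by ring
end
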